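/- arXiv:2204.10775 — 4 statements merged into one kernel-verified Lean document; each statement's English description precedes it below -/
import Mathlib

section
/- Let g be a special oriented two-graph on r vertices. Then π(H(r)) ≥ r! / (|Aut(g)|·2^{C(r−1,2)}). -/
def IsOrientedTwoGraph {V : Type*} (g : V → V → V → ℤ) : Prop :=
  (∀ x y z : V, g y x z = - g x y z) ∧
  (∀ x y z : V, g x z y = - g x y z) ∧
  (∀ x y z : V, x ≠ y → y ≠ z → x ≠ z → g x y z = 1 ∨ g x y z = -1) ∧
  (∀ x y z w : V, x ≠ y → x ≠ z → x ≠ w → y ≠ z → y ≠ w → z ≠ w →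
    g x y z * g y x w * g z y w * g x z w = 1)

/-- Isomorphism of oriented two-graphs (on possibly different vertex sets). -/
def TwoGraphIso {V₁ V₂ : Type*} (g₁ : V₁ → V₁ → V₁ → ℤ) (g₂ : V₂ → V₂ → V₂ → ℤ) : Prop :=
  ∃ φ : V₁ ≃ V₂, ∀ x y z, g₂ (φ x) (φ y) (φ z) = g₁ x y z

/-- The restriction `h|_A` of an oriented two-graph to a subset `A` of its vertices. -/
def restrict3 {W : Type*} (h : W → W → W → ℤ) (A : Finset W) :
    {a // a ∈ A} → {a // a ∈ A} → {a // a ∈ A} → ℤ :=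
  fun x y z => h x.1 y.1 z.1

/-- An oriented two-graph `g` on `r` vertices is special if for every oriented two-graph
`h` on a vertex set `W` of `r+1` vertices, at most `2` of the `r`-element subsets
`A ⊆ W` satisfy `h|_A ≅ g`. -/
def IsSpecial {V : Type} [Fintype V] (g : V → V → V → ℤ) : Prop :=
  ∀ (W : Type) [Fintype W], ∀ h : W → W → W → ℤ,
    IsOrientedTwoGraph h → Fintype.card W = Fintype.card V + 1 →
    {A : Finset W | A.card = Fintype.card V ∧ TwoGraphIso g (restrict3 h A)}.ncard ≤ 2

def autG {V : Type*} (g : V → V → V → ℤ) : Set (Equiv.Perm V) :=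
  {σ | ∀ x y z, g (σ x) (σ y) (σ z) = g x y z}

def TriangleFree (r : ℕ) {V : Type*} [DecidableEq V] (H : Finset (Finset V)) : Prop :=
  (∀ A ∈ H, A.card = r) ∧
  ∀ S : Finset V, S.card = r + 1 → (H.filter (fun A => A ⊆ S)).card ≤ 2

noncomputable def exTri (r n : ℕ) : ℕ :=
  sSup {m | ∃ H : Finset (Finset (Fin n)), TriangleFree r H ∧ H.card = m}

namespace S10

variable {V : Type*}

section OTG
variable {g : V → V → V → ℤ}

lemma otg_rot (hg : IsOrientedTwoGraph g) (x y w : V) : g x y w = g w x y := by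
  have h1 := hg.2.1 x y w
  have h2 := hg.1 w x y
  linarith

lemma otg_pm (hg : IsOrientedTwoGraph g) {x y z : V} (hxy : x ≠ y) (hyz : y ≠ z) (hxz : x ≠ z) :
    g x y z = 1 ∨ g x y z = -1 := hg.2.2.1 x y z hxy hyz hxz

lemma otg_recon (hg : IsOrientedTwoGraph g) {x y z w : V} (hxy : x ≠ y) (hxz : x ≠ z) (hxw : x ≠ w)
    (hyz : y ≠ z) (hyw : y ≠ w) (hzw : z ≠ w) :
    g x y z = -(g w x y * g w y z * g w z x) := by
  have P := hg.2.2.2 x y z w hxy hxz hxw hyz hyw hzw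
  have e1 : g y x w = - g w x y := by
    have a1 := hg.1 x y w
    have a2 := otg_rot hg x y w
    linarith
  have e2 : g z y w = - g w y z := by
    have a1 := hg.1 y z w
    have a2 := otg_rot hg y z w
    linarith
  have e3 : g x z w = - g w z x := by
    have a1 := otg_rot hg x z w
    have a2 := hg.2.1 w z x
    linarith
  rw [e1, e2, e3] at P
  have hb := otg_pm hg hxw.symm hxy (Ne.symm hyw) -- g w x y
  have hc := otg_pm hg (Ne.symm hyw) hyz (Ne.symm hzw) -- g w y z
  have hd := otg_pm hg (Ne.symm hzw) (Ne.symm hxz) (Ne.symm hxw) -- g w z x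
  rcases hb with hb | hb <;> rcases hc with hc | hc <;> rcases hd with hd | hd <;>
    rw [hb, hc, hd] at P ⊢ <;> linarith

end OTG

section Iso

lemma tgi_refl {V₁ : Type*} (g₁ : V₁ → V₁ → V₁ → ℤ) : TwoGraphIso g₁ g₁ :=
  ⟨Equiv.refl _, fun _ _ _ => rfl⟩

lemma tgi_symm {V₁ V₂ : Type*} {g₁ : V₁ → V₁ → V₁ → ℤ} {g₂ : V₂ → V₂ → V₂ → ℤ}
    (h : TwoGraphIso g₁ g₂) : TwoGraphIso g₂ g₁ := by
  obtain ⟨φ, hφ⟩ := h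
  exact ⟨φ.symm, fun x y z => by
    have := hφ (φ.symm x) (φ.symm y) (φ.symm z); simpa using this.symm⟩

lemma tgi_trans {V₁ V₂ V₃ : Type*} {g₁ : V₁ → V₁ → V₁ → ℤ} {g₂ : V₂ → V₂ → V₂ → ℤ}
    {g₃ : V₃ → V₃ → V₃ → ℤ} (h12 : TwoGraphIso g₁ g₂) (h23 : TwoGraphIso g₂ g₃) :
    TwoGraphIso g₁ g₃ := by
  obtain ⟨φ, hφ⟩ := h12
  obtain ⟨ψ, hψ⟩ := h23
  exact ⟨φ.trans ψ, fun x y z => by simp [Equiv.trans_apply, hψ, hφ]⟩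

lemma tgi_congr_right {V₀ V₁ V₂ : Type*} {g : V₀ → V₀ → V₀ → ℤ}
    {g₁ : V₁ → V₁ → V₁ → ℤ} {g₂ : V₂ → V₂ → V₂ → ℤ} (h12 : TwoGraphIso g₁ g₂) :
    TwoGraphIso g g₁ ↔ TwoGraphIso g g₂ :=
  ⟨fun h => tgi_trans h h12, fun h => tgi_trans h (tgi_symm h12)⟩

/-- pullback of a triple function along an equiv, isomorphic to the original. -/
lemma tgi_pull {α β : Type*} (e : α ≃ β) (f : β → β → β → ℤ) :
    TwoGraphIso (fun x y z => f (e x) (e y) (e z)) f :=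
  ⟨e, fun _ _ _ => rfl⟩

lemma otg_pull {α β : Type*} (e : α ≃ β) {f : β → β → β → ℤ} (hf : IsOrientedTwoGraph f) :
    IsOrientedTwoGraph (fun x y z => f (e x) (e y) (e z)) := by
  refine ⟨fun x y z => hf.1 _ _ _, fun x y z => hf.2.1 _ _ _, fun x y z hxy hyz hxz =>
    hf.2.2.1 _ _ _ (by simp [hxy]) (by simp [hyz]) (by simp [hxz]),
    fun x y z w h1 h2 h3 h4 h5 h6 =>
    hf.2.2.2 _ _ _ _ (by simp [h1]) (by simp [h2]) (by simp [h3]) (by simp [h4])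
      (by simp [h5]) (by simp [h6])⟩

lemma otg_restrict {W : Type*} {h : W → W → W → ℤ} (hh : IsOrientedTwoGraph h)
    (A : Finset W) : IsOrientedTwoGraph (restrict3 h A) := by
  refine ⟨fun x y z => hh.1 _ _ _, fun x y z => hh.2.1 _ _ _, fun x y z hxy hyz hxz =>
    hh.2.2.1 _ _ _ (fun e => hxy (Subtype.ext e)) (fun e => hyz (Subtype.ext e))
      (fun e => hxz (Subtype.ext e)),
    fun x y z w h1 h2 h3 h4 h5 h6 =>
    hh.2.2.2 _ _ _ _ (fun e => h1 (Subtype.ext e)) (fun e => h2 (Subtype.ext e))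
      (fun e => h3 (Subtype.ext e)) (fun e => h4 (Subtype.ext e))
      (fun e => h5 (Subtype.ext e)) (fun e => h6 (Subtype.ext e))⟩

end Iso

section ExTri

lemma triangleFree_empty (r n : ℕ) : TriangleFree r (∅ : Finset (Finset (Fin n))) := by
  constructor
  · intro A hA; simp at hA
  · intro S _; simp

lemma exTri_bddAbove (r n : ℕ) :
    BddAbove {m | ∃ H : Finset (Finset (Fin n)), TriangleFree r H ∧ H.card = m} := by
  refine ⟨Fintype.card (Finset (Fin n)), fun m hm => ?_⟩
  obtain ⟨H, _, rfl⟩ := hm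
  exact Finset.card_le_univ H

lemma le_exTri {r n : ℕ} {H : Finset (Finset (Fin n))} (hH : TriangleFree r H) :
    H.card ≤ exTri r n :=
  le_csSup (exTri_bddAbove r n) ⟨H, hH, rfl⟩

lemma exTri_spec (r n : ℕ) :
    ∃ H : Finset (Finset (Fin n)), TriangleFree r H ∧ H.card = exTri r n := by
  have hne : {m | ∃ H : Finset (Finset (Fin n)), TriangleFree r H ∧ H.card = m}.Nonempty :=
    ⟨0, ⟨∅, triangleFree_empty r n, Finset.card_empty⟩⟩
  exact Nat.sSup_mem hne (exTri_bddAbove r n)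

/-- at most 2 (indeed sometimes 1) edges inside any set of at most r+1 vertices -/
lemma triangleFree_filter_le {r : ℕ} {α : Type*} [DecidableEq α] {H : Finset (Finset α)}
    (hH : TriangleFree r H) (T : Finset α) (hT : T.card ≤ r + 1) :
    (H.filter (fun A => A ⊆ T)).card ≤ 2 := by
  rcases eq_or_lt_of_le hT with h | h
  · exact hH.2 T h
  · have hT' : T.card ≤ r := Nat.lt_succ_iff.mp h
    refine le_trans (Finset.card_le_one.mpr ?_) one_le_two
    intro A hA B hB
    simp only [Finset.mem_filter] at hA hB
    have hAT : A = T := Finset.eq_of_subset_of_card_le hA.2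
      (le_trans hT' (le_of_eq (hH.1 A hA.1).symm))
    have hBT : B = T := Finset.eq_of_subset_of_card_le hB.2
      (le_trans hT' (le_of_eq (hH.1 B hB.1).symm))
    rw [hAT, hBT]

end ExTri

section Mono

lemma transfer2 {n r : ℕ} {H : Finset (Finset (Fin (n+1)))} (hH : TriangleFree r H)
    (v : Fin (n+1)) (hv : ∀ A ∈ H, v ∉ A) : H.card ≤ exTri r n := by
  classical
  set j : Fin n → Fin (n+1) := v.succAbove with hjdef
  have hj : Function.Injective j := Fin.succAbove_right_injective
  have hrange : ∀ A ∈ H, ∀ x ∈ A, x ∈ Set.range j := by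
    intro A hA x hx
    rw [hjdef, Fin.range_succAbove]
    exact fun hxv => hv A hA (hxv ▸ hx)
  have key : ∀ A ∈ H, (A.preimage j hj.injOn).image j = A := by
    intro A hA
    ext y
    simp only [Finset.mem_image, Finset.mem_preimage]
    constructor
    · rintro ⟨x, hx, rfl⟩; exact hx
    · intro hy
      obtain ⟨x, rfl⟩ := hrange A hA y hy
      exact ⟨x, hy, rfl⟩
  have keycard : ∀ A ∈ H, (A.preimage j hj.injOn).card = A.card := by
    intro A hA
    conv_rhs => rw [← key A hA]
    rw [Finset.card_image_of_injective _ hj]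
  set H' : Finset (Finset (Fin n)) := H.image (fun A => A.preimage j hj.injOn) with hH'
  have hcard : H'.card = H.card := by
    apply Finset.card_image_of_injOn
    intro A1 h1 A2 h2 he
    have he' : A1.preimage j hj.injOn = A2.preimage j hj.injOn := he
    have : (A1.preimage j hj.injOn).image j = (A2.preimage j hj.injOn).image j :=
      congrArg (Finset.image j) he'
    rwa [key A1 h1, key A2 h2] at this
  have hTF : TriangleFree r H' := by
    constructor
    · intro B hB
      obtain ⟨A, hA, rfl⟩ := Finset.mem_image.mp hB
      rw [keycard A hA]
      exact hH.1 A hA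
    · intro S hS
      have hScard : (S.image j).card = r + 1 := by
        rw [Finset.card_image_of_injective _ hj, hS]
      refine le_trans (Finset.card_le_card_of_injOn (fun B => B.image j) ?_ ?_) (hH.2 (S.image j) hScard)
      · intro B hB
        simp only [Finset.mem_coe, Finset.mem_filter] at hB ⊢
        obtain ⟨A, hA, rfl⟩ := Finset.mem_image.mp hB.1
        exact ⟨by rw [key A hA]; exact hA, Finset.image_subset_image hB.2⟩
      · intro B1 _ B2 _ he
        exact Finset.image_injective hj he
  calc H.card = H'.card := hcard.symm
    _ ≤ exTri r n := le_exTri hTF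

lemma exTri_int_mono {r n : ℕ} :
    exTri r (n+1) * (n + 1 - r) ≤ (n+1) * exTri r n := by
  classical
  obtain ⟨H, hH, hcard⟩ := exTri_spec r (n+1)
  have hv : ∀ v : Fin (n+1), (H.filter (fun A => v ∉ A)).card ≤ exTri r n := by
    intro v
    have hTF : TriangleFree r (H.filter (fun A => v ∉ A)) := by
      constructor
      · intro A hA
        exact hH.1 A (Finset.mem_of_mem_filter _ hA)
      · intro S hS
        refine le_trans (Finset.card_le_card ?_) (hH.2 S hS)
        exact Finset.filter_subset_filter _ (Finset.filter_subset _ _)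
    exact transfer2 hTF v (fun A hA => (Finset.mem_filter.mp hA).2)
  have hsum : ∑ v : Fin (n+1), (H.filter (fun A => v ∉ A)).card = H.card * (n + 1 - r) := by
    have : ∀ v : Fin (n+1), (H.filter (fun A => v ∉ A)).card
        = ∑ A ∈ H, if v ∉ A then 1 else 0 := fun v => Finset.card_filter _ _
    simp only [this]
    rw [Finset.sum_comm]
    have : ∀ A ∈ H, (∑ v : Fin (n+1), if v ∉ A then 1 else 0) = n + 1 - r := by
      intro A hA
      rw [← Finset.card_filter]
      have : Finset.univ.filter (fun v => v ∉ A) = Aᶜ := by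
        ext x; simp
      rw [this, Finset.card_compl, hH.1 A hA]
      simp
    rw [Finset.sum_congr rfl this, Finset.sum_const, smul_eq_mul]
  calc exTri r (n+1) * (n + 1 - r) = H.card * (n+1-r) := by rw [hcard]
    _ = ∑ v : Fin (n+1), (H.filter (fun A => v ∉ A)).card := hsum.symm
    _ ≤ ∑ _v : Fin (n+1), exTri r n := Finset.sum_le_sum (fun v _ => hv v)
    _ = (n+1) * exTri r n := by rw [Finset.sum_const, Finset.card_univ, Fintype.card_fin, smul_eq_mul]

lemma choose_id {r n : ℕ} (hrn : r ≤ n) :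
    (n + 1 - r) * (n+1).choose r = (n+1) * n.choose r := by
  have hpos : 0 < r.factorial * (n - r).factorial :=
    Nat.mul_pos r.factorial_pos (n - r).factorial_pos
  apply Nat.eq_of_mul_eq_mul_right hpos
  have h1 := Nat.choose_mul_factorial_mul_factorial (le_trans hrn (Nat.le_succ n))
  have h2 := Nat.choose_mul_factorial_mul_factorial hrn
  have hsub : n + 1 - r = (n - r) + 1 := Nat.succ_sub hrn
  calc (n + 1 - r) * (n+1).choose r * (r.factorial * (n - r).factorial)
      = (n+1).choose r * r.factorial * ((n - r + 1) * (n-r).factorial) := by rw [hsub]; ring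
    _ = (n+1).choose r * r.factorial * (n + 1 - r).factorial := by rw [hsub, Nat.factorial_succ]
    _ = (n+1).factorial := h1
    _ = (n+1) * n.factorial := Nat.factorial_succ n
    _ = (n+1) * (n.choose r * r.factorial * (n-r).factorial) := by rw [h2]
    _ = (n+1) * n.choose r * (r.factorial * (n-r).factorial) := by ring

lemma f_antitone {r n : ℕ} (hrn : r ≤ n) :
    (exTri r (n+1) : ℝ) / ((n+1).choose r : ℝ) ≤ (exTri r n : ℝ) / (n.choose r : ℝ) := by
  have hc0 : 0 < (n.choose r : ℝ) := by
    exact_mod_cast Nat.choose_pos hrn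
  have hc1 : 0 < ((n+1).choose r : ℝ) := by
    exact_mod_cast Nat.choose_pos (le_trans hrn (Nat.le_succ n))
  rw [div_le_div_iff₀ hc1 hc0]
  have key : exTri r (n+1) * n.choose r * (n+1) ≤ exTri r n * (n+1).choose r * (n+1) := by
    calc exTri r (n+1) * n.choose r * (n+1) = exTri r (n+1) * ((n+1) * n.choose r) := by ring
      _ = exTri r (n+1) * ((n + 1 - r) * (n+1).choose r) := by rw [choose_id hrn]
      _ = (exTri r (n+1) * (n + 1 - r)) * (n+1).choose r := by ring
      _ ≤ ((n+1) * exTri r n) * (n+1).choose r :=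
          Nat.mul_le_mul_right _ exTri_int_mono
      _ = exTri r n * (n+1).choose r * (n+1) := by ring
  have := Nat.le_of_mul_le_mul_right key (Nat.succ_pos n)
  exact_mod_cast this

end Mono

section OTGzero
variable {g : V → V → V → ℤ}

lemma otg_xxz (hg : IsOrientedTwoGraph g) (x z : V) : g x x z = 0 := by
  have := hg.1 x x z; linarith

lemma otg_xyy (hg : IsOrientedTwoGraph g) (x y : V) : g x y y = 0 := by
  have := hg.2.1 x y y; linarith

lemma otg_xyx (hg : IsOrientedTwoGraph g) (x y : V) : g x y x = 0 := by
  have h1 := hg.2.1 x x y; have h2 := otg_xxz hg x y; linarith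

end OTGzero

section Tournament

def pm (b : Bool) : ℤ := if b then 1 else -1

lemma pm_mul_self (b : Bool) : pm b * pm b = 1 := by cases b <;> simp [pm]

lemma pm_cases (b : Bool) : pm b = 1 ∨ pm b = -1 := by cases b <;> simp [pm]

lemma pm_decide {e : ℤ} (he : e = 1 ∨ e = -1) : pm (decide (e = 1)) = e := by
  rcases he with h | h <;> simp [h, pm]

lemma decide_pm (b : Bool) : decide (pm b = 1) = b := by cases b <;> simp [pm]

lemma prod3_pm {a b c : ℤ} (ha : a = 1 ∨ a = -1) (hb : b = 1 ∨ b = -1)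
    (hc : c = 1 ∨ c = -1) : a * b * c = 1 ∨ a * b * c = -1 := by
  rcases ha with h | h <;> rcases hb with h' | h' <;> rcases hc with h'' | h'' <;>
    rw [h, h', h''] <;> norm_num

/-- abstract tournaments -/
def IsTour {k : ℕ} (t : Fin k → Fin k → ℤ) : Prop :=
  (∀ x y, t y x = - t x y) ∧ (∀ x y, x ≠ y → t x y = 1 ∨ t x y = -1)

lemma IsTour.diag {k : ℕ} {t : Fin k → Fin k → ℤ} (ht : IsTour t) (x : Fin k) :
    t x x = 0 := by have := ht.1 x x; linarith

lemma IsTour.sq {k : ℕ} {t : Fin k → Fin k → ℤ} (ht : IsTour t) {x y : Fin k}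
    (h : x ≠ y) : t x y * t x y = 1 := by
  rcases ht.2 x y h with h' | h' <;> rw [h'] <;> norm_num

/-- the oriented two-graph of a tournament -/
def gtor {k : ℕ} (t : Fin k → Fin k → ℤ) : Fin k → Fin k → Fin k → ℤ :=
  fun x y z => -(t x y * t y z * t z x)

lemma otg_gtor {k : ℕ} {t : Fin k → Fin k → ℤ} (ht : IsTour t) :
    IsOrientedTwoGraph (gtor t) := by
  refine ⟨fun x y z => ?_, fun x y z => ?_, fun x y z hxy hyz hxz => ?_,
    fun x y z w h1 h2 h3 h4 h5 h6 => ?_⟩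
  · show -(t y x * t x z * t z y) = -(-(t x y * t y z * t z x))
    rw [ht.1 x y, ht.1 z x, ht.1 y z]; ring
  · show -(t x z * t z y * t y x) = -(-(t x y * t y z * t z x))
    rw [ht.1 z x, ht.1 y z, ht.1 x y]; ring
  · rcases ht.2 x y hxy with h1 | h1 <;> rcases ht.2 y z hyz with h2 | h2 <;>
      rcases ht.2 z x (Ne.symm hxz) with h3 | h3 <;>
      simp [gtor, h1, h2, h3]
  · show -(t x y * t y z * t z x) * -(t y x * t x w * t w y) * -(t z y * t y w * t w z) *
      -(t x z * t z w * t w x) = 1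
    rw [ht.1 x y, ht.1 y w, ht.1 y z, ht.1 z w, ht.1 z x, ht.1 x w]
    have e1 := ht.sq h1
    have e2 := ht.sq h4
    have e3 := ht.sq (Ne.symm h2)
    have e4 := ht.sq h3
    have e5 := ht.sq h5
    have e6 := ht.sq h6
    linear_combination (t y z * t y z * t z x * t z x * t x w * t x w * t y w * t y w *
        t z w * t z w) * e1
      + (t z x * t z x * t x w * t x w * t y w * t y w * t z w * t z w) * e2
      + (t x w * t x w * t y w * t y w * t z w * t z w) * e3
      + (t y w * t y w * t z w * t z w) * e4
      + (t z w * t z w) * e5 + e6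

/-- canonical tournament reconstructing a two-graph -/
def torOf {k : ℕ} (h : Fin (k+1) → Fin (k+1) → Fin (k+1) → ℤ) :
    Fin (k+1) → Fin (k+1) → ℤ :=
  fun x y => if x = y then 0 else if x = 0 then 1 else if y = 0 then -1 else h 0 x y

lemma torOf_0y {k : ℕ} {h : Fin (k+1) → Fin (k+1) → Fin (k+1) → ℤ} {y : Fin (k+1)}
    (hy : y ≠ 0) : torOf h 0 y = 1 := by simp [torOf, Ne.symm hy]

lemma torOf_y0 {k : ℕ} {h : Fin (k+1) → Fin (k+1) → Fin (k+1) → ℤ} {y : Fin (k+1)}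
    (hy : y ≠ 0) : torOf h y 0 = -1 := by simp [torOf, hy]

lemma torOf_xy {k : ℕ} {h : Fin (k+1) → Fin (k+1) → Fin (k+1) → ℤ} {x y : Fin (k+1)}
    (hxy : x ≠ y) (hx : x ≠ 0) (hy : y ≠ 0) : torOf h x y = h 0 x y := by
  simp [torOf, hxy, hx, hy]

lemma isTour_torOf {k : ℕ} {h : Fin (k+1) → Fin (k+1) → Fin (k+1) → ℤ}
    (hh : IsOrientedTwoGraph h) : IsTour (torOf h) := by
  constructor
  · intro x y
    by_cases hxy : x = y
    · subst hxy; simp [torOf]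
    · by_cases hx : x = 0
      · subst hx
        rw [torOf_0y (Ne.symm hxy), torOf_y0 (Ne.symm hxy)]
      · by_cases hy : y = 0
        · subst hy
          rw [torOf_y0 hx, torOf_0y hx]; norm_num
        · rw [torOf_xy hxy hx hy, torOf_xy (Ne.symm hxy) hy hx]
          have := hh.2.1 0 x y; linarith
  · intro x y hxy
    by_cases hx : x = 0
    · subst hx; rw [torOf_0y (Ne.symm hxy)]; left; rfl
    · by_cases hy : y = 0
      · subst hy; rw [torOf_y0 hx]; right; rfl
      · rw [torOf_xy hxy hx hy]
        exact hh.2.2.1 0 x y (Ne.symm hx) hxy (Ne.symm hy)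

lemma gtor_torOf {k : ℕ} {h : Fin (k+1) → Fin (k+1) → Fin (k+1) → ℤ}
    (hh : IsOrientedTwoGraph h) : gtor (torOf h) = h := by
  have ht := isTour_torOf hh
  funext x y z
  by_cases hxy : x = y
  · subst hxy
    show -(torOf h x x * torOf h x z * torOf h z x) = h x x z
    rw [ht.diag, otg_xxz hh]; ring
  by_cases hyz : y = z
  · subst hyz
    show -(torOf h x y * torOf h y y * torOf h y x) = h x y y
    rw [ht.diag, otg_xyy hh]; ring
  by_cases hxz : x = z
  · subst hxz
    show -(torOf h x y * torOf h y x * torOf h x x) = h x y x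
    rw [ht.diag, otg_xyx hh]; ring
  show -(torOf h x y * torOf h y z * torOf h z x) = h x y z
  by_cases hx : x = 0
  · subst hx
    have hy : y ≠ 0 := Ne.symm hxy
    have hz : z ≠ 0 := Ne.symm hxz
    rw [torOf_0y hy, torOf_y0 hz, torOf_xy hyz hy hz]
    ring
  by_cases hy : y = 0
  · subst hy
    have hz : z ≠ 0 := Ne.symm hyz
    rw [torOf_y0 hx, torOf_0y hz, torOf_xy (Ne.symm hxz) hz hx]
    have r1 := otg_rot hh x 0 z
    have r2 := otg_rot hh z x 0
    linarith
  by_cases hz : z = 0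
  · subst hz
    rw [torOf_xy hxy hx hy, torOf_y0 hy, torOf_0y hx]
    have r1 := otg_rot hh x y 0
    linarith
  rw [torOf_xy hxy hx hy, torOf_xy hyz hy hz, torOf_xy (Ne.symm hxz) hz hx]
  have := otg_recon hh hxy hxz hx hyz hy hz
  linarith

end Tournament

section Fiber

/-- the set of increasing pairs -/
abbrev PR (k : ℕ) := {p : Fin k × Fin k // p.1 < p.2}

def torP {k : ℕ} (v : PR k → Bool) : Fin k → Fin k → ℤ := fun x y =>
  if h : x < y then pm (v ⟨(x, y), h⟩) else if h' : y < x then -pm (v ⟨(y, x), h'⟩) else 0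

lemma torP_lt {k : ℕ} (v : PR k → Bool) {x y : Fin k} (h : x < y) :
    torP v x y = pm (v ⟨(x, y), h⟩) := by simp [torP, h]

lemma isTour_torP {k : ℕ} (v : PR k → Bool) : IsTour (torP v) := by
  constructor
  · intro x y
    rcases lt_trichotomy x y with h | h | h
    · simp [torP, h, asymm h]
    · simp [torP, h, lt_irrefl]
    · simp [torP, h, asymm h]
  · intro x y hxy
    rcases hxy.lt_or_gt with h | h
    · rw [torP_lt v h]; exact pm_cases _
    · simp only [torP, dif_neg (asymm h), dif_pos h]
      rcases pm_cases (v ⟨(y, x), h⟩) with h' | h' <;> rw [h'] <;> norm_num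

/-- switching a tournament by a sign function -/
def sgn {k : ℕ} (w : Fin k → Bool) : Fin (k+1) → ℤ :=
  fun x => if hx : x = 0 then 1 else pm (w (x.pred hx))

lemma sgn_zero {k : ℕ} (w : Fin k → Bool) : sgn w 0 = 1 := by simp [sgn]

lemma sgn_succ {k : ℕ} (w : Fin k → Bool) (m : Fin k) : sgn w m.succ = pm (w m) := by
  simp [sgn, Fin.succ_ne_zero, Fin.pred_succ]

lemma sgn_sq {k : ℕ} (w : Fin k → Bool) (x : Fin (k+1)) : sgn w x * sgn w x = 1 := by
  unfold sgn
  split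
  · norm_num
  · exact pm_mul_self _

lemma sgn_pm {k : ℕ} (w : Fin k → Bool) (x : Fin (k+1)) :
    sgn w x = 1 ∨ sgn w x = -1 := by
  unfold sgn
  split
  · left; rfl
  · exact pm_cases _

def swt {k : ℕ} (w : Fin k → Bool) (t : Fin (k+1) → Fin (k+1) → ℤ) :
    Fin (k+1) → Fin (k+1) → ℤ :=
  fun x y => sgn w x * sgn w y * t x y

lemma isTour_swt {k : ℕ} (w : Fin k → Bool) {t : Fin (k+1) → Fin (k+1) → ℤ}
    (ht : IsTour t) : IsTour (swt w t) := by
  constructor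
  · intro x y
    show sgn w y * sgn w x * t y x = -(sgn w x * sgn w y * t x y)
    rw [ht.1 x y]; ring
  · intro x y hxy
    exact prod3_pm (sgn_pm w x) (sgn_pm w y) (ht.2 x y hxy)

lemma gtor_swt {k : ℕ} (w : Fin k → Bool) {t : Fin (k+1) → Fin (k+1) → ℤ}
    (ht : IsTour t) : gtor (swt w t) = gtor t := by
  funext x y z
  show -(sgn w x * sgn w y * t x y * (sgn w y * sgn w z * t y z) *
    (sgn w z * sgn w x * t z x)) = -(t x y * t y z * t z x)
  have h1 := sgn_sq w x
  have h2 := sgn_sq w y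
  have h3 := sgn_sq w z
  linear_combination (-(t x y * t y z * t z x) * (sgn w y * sgn w y) *
      (sgn w z * sgn w z)) * h1
    + (-(t x y * t y z * t z x) * (sgn w z * sgn w z)) * h2
    + (-(t x y * t y z * t z x)) * h3

/-- the map from sign functions into the fiber over `h` -/
def imap {k : ℕ} (h : Fin (k+1) → Fin (k+1) → Fin (k+1) → ℤ) (w : Fin k → Bool) :
    PR (k+1) → Bool :=
  fun q => decide (swt w (torOf h) q.1.1 q.1.2 = 1)

def jmap {k : ℕ} (v : PR (k+1) → Bool) : Fin k → Bool :=
  fun m => decide (torP v 0 m.succ = 1)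

lemma torP_imap {k : ℕ} {h : Fin (k+1) → Fin (k+1) → Fin (k+1) → ℤ}
    (hh : IsOrientedTwoGraph h) (w : Fin k → Bool) :
    torP (imap h w) = swt w (torOf h) := by
  have ht := isTour_torOf hh
  have hts := isTour_swt w ht
  funext x y
  rcases lt_trichotomy x y with hlt | heq | hgt
  · rw [torP_lt _ hlt]
    exact pm_decide (hts.2 x y hlt.ne)
  · subst heq
    rw [(isTour_torP _).diag, hts.diag]
  · have : torP (imap h w) x y = -torP (imap h w) y x := (isTour_torP _).1 y x
    rw [this, torP_lt _ hgt]
    show -pm (decide (swt w (torOf h) y x = 1)) = swt w (torOf h) x y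
    rw [pm_decide (hts.2 y x hgt.ne), hts.1 y x]

lemma gtor_imap {k : ℕ} {h : Fin (k+1) → Fin (k+1) → Fin (k+1) → ℤ}
    (hh : IsOrientedTwoGraph h) (w : Fin k → Bool) :
    gtor (torP (imap h w)) = h := by
  rw [torP_imap hh w, gtor_swt w (isTour_torOf hh), gtor_torOf hh]

lemma jmap_imap {k : ℕ} {h : Fin (k+1) → Fin (k+1) → Fin (k+1) → ℤ}
    (hh : IsOrientedTwoGraph h) (w : Fin k → Bool) : jmap (imap h w) = w := by
  funext m
  show decide (torP (imap h w) 0 m.succ = 1) = w m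
  rw [torP_imap hh w]
  show decide (sgn w 0 * sgn w m.succ * torOf h 0 m.succ = 1) = w m
  rw [sgn_zero, sgn_succ, torOf_0y (Fin.succ_ne_zero m)]
  rw [show (1 : ℤ) * pm (w m) * 1 = pm (w m) by ring]
  exact decide_pm _

lemma imap_jmap {k : ℕ} {h : Fin (k+1) → Fin (k+1) → Fin (k+1) → ℤ}
    (hh : IsOrientedTwoGraph h) {v : PR (k+1) → Bool} (hv : gtor (torP v) = h) :
    imap h (jmap v) = v := by
  have hT := isTour_torP v
  have hsgn : ∀ x : Fin (k+1), x ≠ 0 → sgn (jmap v) x = torP v 0 x := by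
    intro x hx
    show (if hx' : x = 0 then (1:ℤ) else pm (jmap v (x.pred hx'))) = torP v 0 x
    rw [dif_neg hx]
    show pm (decide (torP v 0 (x.pred hx).succ = 1)) = torP v 0 x
    rw [Fin.succ_pred]
    exact pm_decide (hT.2 0 x (Ne.symm hx))
  funext q
  obtain ⟨⟨x, y⟩, hlt⟩ := q
  show decide (swt (jmap v) (torOf h) x y = 1) = v ⟨(x, y), hlt⟩
  have key : swt (jmap v) (torOf h) x y = torP v x y := by
    by_cases hx : x = 0
    · subst hx
      have hy : y ≠ 0 := hlt.ne'
      show sgn (jmap v) 0 * sgn (jmap v) y * torOf h 0 y = torP v 0 y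
      rw [sgn_zero, hsgn y hy, torOf_0y hy]
      ring
    · have hy : y ≠ 0 := by
        intro hy0
        subst hy0
        exact hx (Fin.le_zero_iff.mp hlt.le)
      show sgn (jmap v) x * sgn (jmap v) y * torOf h x y = torP v x y
      rw [hsgn x hx, hsgn y hy, torOf_xy hlt.ne hx hy, ← hv]
      show torP v 0 x * torP v 0 y * -(torP v 0 x * torP v x y * torP v y 0) = torP v x y
      rw [hT.1 0 y]
      have s1 := hT.sq (show (0 : Fin (k+1)) ≠ x from Ne.symm hx)
      have s2 := hT.sq (show (0 : Fin (k+1)) ≠ y from Ne.symm hy)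
      linear_combination (torP v 0 y * torP v 0 y * torP v x y) * s1 + (torP v x y) * s2
  rw [key, torP_lt v hlt]
  exact decide_pm _

lemma fiber_card {k : ℕ} {h : Fin (k+1) → Fin (k+1) → Fin (k+1) → ℤ}
    (hh : IsOrientedTwoGraph h) :
    (Finset.univ.filter (fun v : PR (k+1) → Bool => gtor (torP v) = h)).card = 2 ^ k := by
  classical
  have hbij := Finset.card_bij'
    (s := Finset.univ.filter (fun v : PR (k+1) → Bool => gtor (torP v) = h))
    (t := (Finset.univ : Finset (Fin k → Bool)))
    (fun v _ => jmap v) (fun w _ => imap h w)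
    (fun v _ => Finset.mem_univ _)
    (fun w _ => Finset.mem_filter.mpr ⟨Finset.mem_univ _, gtor_imap hh w⟩)
    (fun v hv => imap_jmap hh (Finset.mem_filter.mp hv).2)
    (fun w _ => jmap_imap hh w)
  rw [hbij, Finset.card_univ]
  simp

end Fiber

section Counting

lemma cardRestrict {α β : Type*} [Fintype α] [Fintype β] [DecidableEq α] [DecidableEq β]
    (j : β → α) (hj : Function.Injective j) (Q : (β → Bool) → Prop) [DecidablePred Q] :
    (Finset.univ.filter (fun u : α → Bool => Q (u ∘ j))).card
      = (Finset.univ.filter Q).card * 2 ^ (Fintype.card α - Fintype.card β) := by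
  classical
  rw [← Fintype.card_subtype, ← Fintype.card_subtype]
  let e₀ : ↥(Set.range j) ≃ β := (Equiv.ofInjective j hj).symm
  let E : (α → Bool) ≃ ((β → Bool) × (↥(Set.range j)ᶜ → Bool)) :=
    (Equiv.arrowCongr (Equiv.Set.sumCompl (Set.range j)).symm (Equiv.refl Bool)).trans
      ((Equiv.sumArrowEquivProdArrow _ _ _).trans
        (Equiv.prodCongr (Equiv.arrowCongr e₀ (Equiv.refl Bool)) (Equiv.refl _)))
  have hE : ∀ u : α → Bool, (E u).1 = u ∘ j := fun u => funext fun b => rfl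
  have c1 : Fintype.card {u : α → Bool // Q (u ∘ j)}
      = Fintype.card {p : (β → Bool) × (↥(Set.range j)ᶜ → Bool) // Q p.1} :=
    Fintype.card_congr (E.subtypeEquiv (fun u => by rw [hE u]))
  have c2 : Fintype.card {p : (β → Bool) × (↥(Set.range j)ᶜ → Bool) // Q p.1}
      = Fintype.card {w : β → Bool // Q w} * Fintype.card (↥(Set.range j)ᶜ → Bool) := by
    rw [← Fintype.card_prod]
    exact Fintype.card_congr
      ⟨fun p => (⟨p.1.1, p.2⟩, p.1.2), fun q => ⟨(q.1.1, q.2), q.1.2⟩,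
        fun p => rfl, fun q => rfl⟩
  have c3 : Fintype.card (↥(Set.range j)ᶜ → Bool)
      = 2 ^ (Fintype.card α - Fintype.card β) := by
    rw [Fintype.card_fun, Fintype.card_bool, Fintype.card_compl_set,
      Set.card_range_of_injective hj]
  rw [c1, c2, c3]

lemma card_PR (k : ℕ) : Fintype.card (PR k) = k.choose 2 := by
  classical
  rw [Fintype.card_subtype]
  set L := Finset.univ.filter (fun p : Fin k × Fin k => p.1 < p.2) with hL
  set G := Finset.univ.filter (fun p : Fin k × Fin k => p.2 < p.1) with hG
  have hLG : L.card = G.card := by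
    refine Finset.card_bij' (fun p _ => (p.2, p.1)) (fun p _ => (p.2, p.1)) ?_ ?_ ?_ ?_
    · intro p hp
      simp only [hL, hG, Finset.mem_filter, Finset.mem_univ, true_and] at hp ⊢
      exact hp
    · intro p hp
      simp only [hL, hG, Finset.mem_filter, Finset.mem_univ, true_and] at hp ⊢
      exact hp
    · intro p _; rfl
    · intro p _; rfl
  have hunion : L ∪ G = (Finset.univ : Finset (Fin k)).offDiag := by
    ext p
    simp only [hL, hG, Finset.mem_union, Finset.mem_filter, Finset.mem_univ,
      Finset.mem_offDiag, true_and]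
    constructor
    · rintro (h | h)
      · exact h.ne
      · exact h.ne'
    · intro h
      exact lt_or_gt_of_ne h
  have hdisj : Disjoint L G := by
    rw [Finset.disjoint_left]
    intro p hp hq
    simp only [hL, hG, Finset.mem_filter] at hp hq
    exact absurd hq.2 (asymm hp.2)
  have hcard : L.card + G.card = k * k - k := by
    rw [← Finset.card_union_of_disjoint hdisj, hunion, Finset.offDiag_card,
      Finset.card_univ, Fintype.card_fin]
  rw [Nat.choose_two_right]
  have hk : k * (k - 1) = k * k - k := by
    cases k with
    | zero => simp
    | succ m =>
      simp only [Nat.add_sub_cancel]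
      have : (m+1) * (m+1) = (m+1) * m + (m+1) := by ring
      omega
  set m := k * (k - 1) with hm
  omega

end Counting

section OrbitStab

instance permSMul {r : ℕ} : SMul (Equiv.Perm (Fin r)) (Fin r → Fin r → Fin r → ℤ) :=
  ⟨fun σ f => fun x y z => f (σ⁻¹ x) (σ⁻¹ y) (σ⁻¹ z)⟩

lemma permSMul_def {r : ℕ} (σ : Equiv.Perm (Fin r)) (f : Fin r → Fin r → Fin r → ℤ)
    (x y z : Fin r) : (σ • f) x y z = f (σ⁻¹ x) (σ⁻¹ y) (σ⁻¹ z) := rfl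

instance permAction {r : ℕ} : MulAction (Equiv.Perm (Fin r)) (Fin r → Fin r → Fin r → ℤ) where
  one_smul f := by
    funext x y z
    rw [permSMul_def]
    simp
  mul_smul σ τ f := by
    funext x y z
    rw [permSMul_def, permSMul_def, permSMul_def]
    simp [mul_inv_rev]

lemma smul_eq_iff_iso {r : ℕ} (g h : Fin r → Fin r → Fin r → ℤ) :
    TwoGraphIso g h ↔ ∃ σ : Equiv.Perm (Fin r), σ • g = h := by
  constructor
  · rintro ⟨φ, hφ⟩
    refine ⟨φ, funext fun x => funext fun y => funext fun z => ?_⟩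
    rw [permSMul_def]
    have := hφ (φ⁻¹ x) (φ⁻¹ y) (φ⁻¹ z)
    simpa [Equiv.Perm.inv_def] using this.symm
  · rintro ⟨σ, rfl⟩
    refine ⟨σ, fun x y z => ?_⟩
    rw [permSMul_def]
    simp [Equiv.Perm.inv_def]

lemma stab_eq_autG {r : ℕ} (g : Fin r → Fin r → Fin r → ℤ) :
    (MulAction.stabilizer (Equiv.Perm (Fin r)) g : Set (Equiv.Perm (Fin r))) = autG g := by
  ext σ
  simp only [SetLike.mem_coe, MulAction.mem_stabilizer_iff]
  constructor
  · intro hσ x y z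
    have := congrFun (congrFun (congrFun hσ (σ x)) (σ y)) (σ z)
    rw [permSMul_def] at this
    simpa [Equiv.Perm.inv_def] using this.symm
  · intro hσ
    funext x y z
    rw [permSMul_def]
    have := hσ (σ⁻¹ x) (σ⁻¹ y) (σ⁻¹ z)
    simpa [Equiv.Perm.inv_def] using this.symm

lemma orbit_card_mul_stab {r : ℕ} (g : Fin r → Fin r → Fin r → ℤ) :
    (Finset.univ.image (fun σ : Equiv.Perm (Fin r) => σ • g)).card * (autG g).ncard
      = r.factorial := by
  classical
  have horb : (MulAction.orbit (Equiv.Perm (Fin r)) g : Set (Fin r → Fin r → Fin r → ℤ))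
      = ↑(Finset.univ.image (fun σ : Equiv.Perm (Fin r) => σ • g)) := by
    rw [Finset.coe_image, Finset.coe_univ, Set.image_univ]
    rfl
  have h1 : Nat.card (MulAction.orbit (Equiv.Perm (Fin r)) g)
      = (Finset.univ.image (fun σ : Equiv.Perm (Fin r) => σ • g)).card := by
    rw [Nat.card_coe_set_eq, horb, Set.ncard_coe_finset]
  have h2 : Nat.card (MulAction.stabilizer (Equiv.Perm (Fin r)) g) = (autG g).ncard := by
    rw [← Nat.card_coe_set_eq, ← stab_eq_autG]
    rfl
  have h3 : Nat.card (MulAction.orbit (Equiv.Perm (Fin r)) g)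
      * Nat.card (MulAction.stabilizer (Equiv.Perm (Fin r)) g)
      = Nat.card (Equiv.Perm (Fin r)) := by
    rw [Nat.card_congr (MulAction.orbitEquivQuotientStabilizer (Equiv.Perm (Fin r)) g)]
    exact (Subgroup.card_eq_card_quotient_mul_card_subgroup _).symm
  rw [← h1, ← h2, h3, Nat.card_eq_fintype_card, Fintype.card_perm, Fintype.card_fin]

end OrbitStab

section MainCount

lemma ncard_setOf {α : Type*} [Fintype α] (p : α → Prop) [DecidablePred p] :
    {x | p x}.ncard = (Finset.univ.filter p).card := by
  rw [Set.ncard_eq_toFinset_card', Set.toFinset_setOf]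

lemma filter_card_congr {α : Type*} {p q : α → Prop} [DecidablePred p] [DecidablePred q]
    (s : Finset α) (h : ∀ a ∈ s, p a ↔ q a) : (s.filter p).card = (s.filter q).card := by
  rw [Finset.filter_congr h]

/-- fibers of the map tournament ↦ two-graph, any `k` -/
lemma fiber_ncard : ∀ {k : ℕ} {h : Fin k → Fin k → Fin k → ℤ}, IsOrientedTwoGraph h →
    {v : PR k → Bool | gtor (torP v) = h}.ncard = 2 ^ (k - 1)
  | 0, h, hh => by
    classical
    have he : {v : PR 0 → Bool | gtor (torP v) = h} = Set.univ := by
      ext v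
      simp only [Set.mem_setOf_eq, Set.mem_univ, iff_true]
      funext x y z
      exact absurd x.isLt (by omega)
    rw [he, Set.ncard_univ, Nat.card_eq_fintype_card, Fintype.card_fun]
    have : Fintype.card (PR 0) = 0 := by rw [card_PR]; rfl
    rw [this]
    simp
  | (k + 1), h, hh => by
    classical
    rw [ncard_setOf, fiber_card hh]
    simp

/-- total count of tournaments on `Fin r` whose two-graph is isomorphic to `g` -/
lemma count_C0 {r : ℕ} {g : Fin r → Fin r → Fin r → ℤ} (hg : IsOrientedTwoGraph g) :
    {v : PR r → Bool | TwoGraphIso g (gtor (torP v))}.ncard * (autG g).ncard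
      = r.factorial * 2 ^ (r - 1) := by
  classical
  rw [ncard_setOf]
  set iso : Finset (Fin r → Fin r → Fin r → ℤ) :=
    Finset.univ.image (fun σ : Equiv.Perm (Fin r) => σ • g) with hiso
  have hmem : ∀ h' : Fin r → Fin r → Fin r → ℤ, h' ∈ iso ↔ TwoGraphIso g h' := by
    intro h'
    rw [hiso, Finset.mem_image]
    rw [smul_eq_iff_iso g h']
    constructor
    · rintro ⟨σ, -, hσ⟩; exact ⟨σ, hσ⟩
    · rintro ⟨σ, hσ⟩; exact ⟨σ, Finset.mem_univ _, hσ⟩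
  have hotg : ∀ h' ∈ iso, IsOrientedTwoGraph h' := by
    intro h' hh'
    rw [hiso, Finset.mem_image] at hh'
    obtain ⟨σ, -, rfl⟩ := hh'
    exact otg_pull (σ⁻¹ : Equiv.Perm (Fin r)) hg
  have hsplit :
      (Finset.univ.filter (fun v : PR r → Bool => TwoGraphIso g (gtor (torP v)))).card
      = ∑ h' ∈ iso,
          (Finset.univ.filter (fun v : PR r → Bool => gtor (torP v) = h')).card := by
    rw [Finset.card_eq_sum_card_fiberwise
      (f := fun v : PR r → Bool => gtor (torP v)) (t := iso)
      (fun v hv => (hmem _).mpr (Finset.mem_filter.mp hv).2)]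
    refine Finset.sum_congr rfl (fun h' hh' => ?_)
    congr 1
    ext v
    simp only [Finset.mem_filter, Finset.mem_univ, true_and]
    constructor
    · rintro ⟨-, hv⟩; exact hv
    · intro hv; exact ⟨(hmem _).mp (hv ▸ hh'), hv⟩
  have hfib : ∀ h' ∈ iso,
      (Finset.univ.filter (fun v : PR r → Bool => gtor (torP v) = h')).card
        = 2 ^ (r - 1) := by
    intro h' hh'
    rw [← ncard_setOf]
    exact fiber_ncard (hotg h' hh')
  rw [hsplit, Finset.sum_congr rfl hfib, Finset.sum_const, smul_eq_mul]
  calc iso.card * 2 ^ (r - 1) * (autG g).ncard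
      = iso.card * (autG g).ncard * 2 ^ (r - 1) := by ring
    _ = r.factorial * 2 ^ (r - 1) := by rw [hiso, orbit_card_mul_stab g]

/-- the tournament on `Fin n` determined by a function on all pairs -/
def bigT (n : ℕ) (u : Fin n × Fin n → Bool) : Fin n → Fin n → ℤ :=
  torP (fun q : PR n => u q.1)

/-- per-subset count on `Fin n` -/
lemma per_A {r n : ℕ} {g : Fin r → Fin r → Fin r → ℤ}
    (A : Finset (Fin n)) (hA : A.card = r) :
    {u : Fin n × Fin n → Bool |
        TwoGraphIso g (restrict3 (gtor (bigT n u)) A)}.ncard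
      = {v : PR r → Bool | TwoGraphIso g (gtor (torP v))}.ncard
          * 2 ^ (n * n - r.choose 2) := by
  classical
  rw [ncard_setOf, ncard_setOf]
  set eA : Fin r ≃o {a // a ∈ A} := A.orderIsoOfFin hA with heA
  set ι : Fin r → Fin n := fun i => (eA i : Fin n) with hι
  have hιmem : ∀ i, ι i ∈ A := fun i => (eA i).2
  have hstrict : ∀ i i' : Fin r, i < i' ↔ ι i < ι i' := by
    intro i i'
    rw [hι]
    constructor
    · intro h
      exact Subtype.coe_lt_coe.mpr (eA.lt_iff_lt.mpr h)
    · intro h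
      exact eA.lt_iff_lt.mp (Subtype.coe_lt_coe.mp h)
  have hιinj : Function.Injective ι := by
    intro i i' h
    exact eA.injective (Subtype.ext h)
  set j : PR r → Fin n × Fin n := fun q => (ι q.1.1, ι q.1.2) with hj
  have hjinj : Function.Injective j := by
    rintro ⟨⟨a, b⟩, hab⟩ ⟨⟨c, d⟩, hcd⟩ h
    simp only [hj, Prod.mk.injEq] at h
    exact Subtype.ext (Prod.ext (hιinj h.1) (hιinj h.2))
  have htour : ∀ (u : Fin n × Fin n → Bool) (i i' : Fin r),
      torP (fun q : PR n => u q.1) (ι i) (ι i') = torP (u ∘ j) i i' := by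
    intro u i i'
    have main : ∀ a b : Fin r, a < b →
        torP (fun q : PR n => u q.1) (ι a) (ι b) = torP (u ∘ j) a b := by
      intro a b hab
      rw [torP_lt _ ((hstrict a b).mp hab), torP_lt _ hab]
      rfl
    rcases lt_trichotomy i i' with h | h | h
    · exact main i i' h
    · subst h
      rw [(isTour_torP _).diag, (isTour_torP _).diag]
    · rw [(isTour_torP (fun q : PR n => u q.1)).1 (ι i') (ι i),
        (isTour_torP (u ∘ j)).1 i' i, main i' i h]
  have hiff : ∀ u : Fin n × Fin n → Bool,
      TwoGraphIso g (restrict3 (gtor (bigT n u)) A)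
        ↔ TwoGraphIso g (gtor (torP (u ∘ j))) := by
    intro u
    have hpull : TwoGraphIso (gtor (torP (u ∘ j)))
        (restrict3 (gtor (bigT n u)) A) := by
      refine ⟨eA.toEquiv, fun x y z => ?_⟩
      show -(torP (fun q : PR n => u q.1) (ι x) (ι y) *
          torP (fun q : PR n => u q.1) (ι y) (ι z) *
          torP (fun q : PR n => u q.1) (ι z) (ι x))
        = -(torP (u ∘ j) x y * torP (u ∘ j) y z * torP (u ∘ j) z x)
      rw [htour u x y, htour u y z, htour u z x]
    exact tgi_congr_right (tgi_symm hpull)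
  rw [filter_card_congr _ (fun u _ => hiff u)]
  have := cardRestrict j hjinj (fun w : PR r → Bool => TwoGraphIso g (gtor (torP w)))
  rw [this]
  congr 1
  rw [Fintype.card_prod, Fintype.card_fin, card_PR]

end MainCount

section MainBound

lemma choose2_split (r : ℕ) : r.choose 2 = (r - 1).choose 2 + (r - 1) := by
  cases r with
  | zero => rfl
  | succ m =>
    simp only [Nat.add_sub_cancel]
    rw [Nat.choose_succ_succ m 1, Nat.choose_one_right, Nat.add_comm]

lemma main_bound {r n : ℕ} (hrn : r ≤ n) {g : Fin r → Fin r → Fin r → ℤ}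
    (hg : IsOrientedTwoGraph g) (hsp : IsSpecial g) :
    n.choose r * r.factorial ≤ exTri r n * ((autG g).ncard * 2 ^ ((r - 1).choose 2)) := by
  classical
  set C0 := {v : PR r → Bool | TwoGraphIso g (gtor (torP v))}.ncard with hC0
  set P : Finset (Finset (Fin n)) := Finset.univ.powersetCard r with hP
  set Hs : (Fin n × Fin n → Bool) → Finset (Finset (Fin n)) :=
    fun u => P.filter (fun A => TwoGraphIso g (restrict3 (gtor (bigT n u)) A)) with hHs
  -- each Hs u is triangle-free
  have hTF : ∀ u, TriangleFree r (Hs u) := by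
    intro u
    constructor
    · intro A hA
      rw [hHs, Finset.mem_filter, hP, Finset.mem_powersetCard] at hA
      exact hA.1.2
    · intro S hS
      have hcardW : Fintype.card {x // x ∈ S} = Fintype.card (Fin r) + 1 := by
        rw [Fintype.card_coe, hS, Fintype.card_fin]
      have hbig : IsOrientedTwoGraph (gtor (bigT n u)) := otg_gtor (isTour_torP _)
      have h2 := hsp {x // x ∈ S} (restrict3 (gtor (bigT n u)) S)
        (otg_restrict hbig S) hcardW
      set T : Set (Finset {x // x ∈ S}) :=
        {A' | A'.card = Fintype.card (Fin r) ∧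
          TwoGraphIso g (restrict3 (restrict3 (gtor (bigT n u)) S) A')} with hT
      have hfin : T.toFinset.card = T.ncard := (Set.ncard_eq_toFinset_card' T).symm
      refine le_trans (le_trans (Finset.card_le_card_of_injOn
        (fun A => A.subtype (· ∈ S)) ?_ ?_) (le_of_eq hfin)) h2
      · intro A hA
        rw [Finset.mem_coe, Finset.mem_filter] at hA
        obtain ⟨hA1, hAS⟩ := hA
        rw [hHs, Finset.mem_filter, hP, Finset.mem_powersetCard] at hA1
        obtain ⟨⟨-, hAcard⟩, hAiso⟩ := hA1
        rw [Finset.mem_coe, Set.mem_toFinset, hT]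
        constructor
        · rw [Finset.card_subtype, Finset.filter_true_of_mem (fun x hx => hAS hx),
            hAcard, Fintype.card_fin]
        · refine tgi_trans hAiso ?_
          refine ⟨⟨fun a => ⟨⟨a.1, hAS a.2⟩, Finset.mem_subtype.mpr a.2⟩,
            fun b => ⟨b.1.1, Finset.mem_subtype.mp b.2⟩, fun a => rfl, fun b => rfl⟩,
            fun x y z => rfl⟩
      · intro A hA B hB hef
        rw [Finset.coe_filter, Set.mem_setOf_eq] at hA hB
        have recA : (A.subtype (· ∈ S)).map (Function.Embedding.subtype _) = A := by
          rw [Finset.subtype_map, Finset.filter_true_of_mem (fun x hx => hA.2 hx)]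
        have recB : (B.subtype (· ∈ S)).map (Function.Embedding.subtype _) = B := by
          rw [Finset.subtype_map, Finset.filter_true_of_mem (fun x hx => hB.2 hx)]
        have hef' : A.subtype (· ∈ S) = B.subtype (· ∈ S) := hef
        rw [← recA, ← recB, hef']
  -- counting
  have hcount : ∀ A ∈ P,
      (Finset.univ.filter (fun u : Fin n × Fin n → Bool =>
        TwoGraphIso g (restrict3 (gtor (bigT n u)) A))).card
      = C0 * 2 ^ (n * n - r.choose 2) := by
    intro A hA
    rw [← ncard_setOf]
    rw [hP, Finset.mem_powersetCard] at hA
    exact per_A A hA.2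
  have hsum : ∑ u : Fin n × Fin n → Bool, (Hs u).card
      = n.choose r * (C0 * 2 ^ (n * n - r.choose 2)) := by
    calc ∑ u : Fin n × Fin n → Bool, (Hs u).card
        = ∑ u : Fin n × Fin n → Bool, ∑ A ∈ P,
            (if TwoGraphIso g (restrict3 (gtor (bigT n u)) A) then 1 else 0) := by
          refine Finset.sum_congr rfl (fun u _ => ?_)
          rw [hHs]
          exact Finset.card_filter _ _
      _ = ∑ A ∈ P, ∑ u : Fin n × Fin n → Bool,
            (if TwoGraphIso g (restrict3 (gtor (bigT n u)) A) then 1 else 0) :=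
          Finset.sum_comm
      _ = ∑ A ∈ P, (Finset.univ.filter (fun u : Fin n × Fin n → Bool =>
            TwoGraphIso g (restrict3 (gtor (bigT n u)) A))).card :=
          Finset.sum_congr rfl (fun A _ => (Finset.card_filter _ _).symm)
      _ = ∑ _A ∈ P, C0 * 2 ^ (n * n - r.choose 2) :=
          Finset.sum_congr rfl hcount
      _ = P.card * (C0 * 2 ^ (n * n - r.choose 2)) := by
          rw [Finset.sum_const, smul_eq_mul]
      _ = n.choose r * (C0 * 2 ^ (n * n - r.choose 2)) := by
          rw [hP, Finset.card_powersetCard, Finset.card_univ, Fintype.card_fin]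
  have hc2n : r.choose 2 ≤ n * n := by
    have h1 : r.choose 2 = Fintype.card (PR r) := (card_PR r).symm
    have h2 : Fintype.card (PR r) ≤ Fintype.card (Fin r × Fin r) :=
      Fintype.card_subtype_le _
    have h3 : Fintype.card (Fin r × Fin r) = r * r := by
      rw [Fintype.card_prod, Fintype.card_fin]
    calc r.choose 2 = Fintype.card (PR r) := h1
      _ ≤ r * r := h3 ▸ h2
      _ ≤ n * n := Nat.mul_le_mul hrn hrn
  have hpow : (2:ℕ) ^ (n * n - r.choose 2) * 2 ^ (r.choose 2) = 2 ^ (n * n) := by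
    rw [← pow_add, Nat.sub_add_cancel hc2n]
  have hpig : ∃ u : Fin n × Fin n → Bool,
      n.choose r * C0 ≤ (Hs u).card * 2 ^ (r.choose 2) := by
    have htot : ∑ _u : Fin n × Fin n → Bool, (n.choose r * C0)
        ≤ ∑ u : Fin n × Fin n → Bool, ((Hs u).card * 2 ^ (r.choose 2)) := by
      rw [Finset.sum_const, ← Finset.sum_mul, hsum, smul_eq_mul, Finset.card_univ]
      have hcardu : Fintype.card (Fin n × Fin n → Bool) = 2 ^ (n * n) := by
        rw [Fintype.card_fun, Fintype.card_bool, Fintype.card_prod, Fintype.card_fin]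
      rw [hcardu]
      apply le_of_eq
      calc 2 ^ (n * n) * (n.choose r * C0)
          = n.choose r * C0 * (2 ^ (n * n - r.choose 2) * 2 ^ (r.choose 2)) := by
            rw [hpow]; ring
        _ = n.choose r * (C0 * 2 ^ (n * n - r.choose 2)) * 2 ^ (r.choose 2) := by ring
    obtain ⟨u, -, hu⟩ := Finset.exists_le_of_sum_le Finset.univ_nonempty htot
    exact ⟨u, hu⟩
  obtain ⟨u, hu⟩ := hpig
  have hle : (Hs u).card ≤ exTri r n := le_exTri (hTF u)
  have h1 : n.choose r * C0 ≤ exTri r n * 2 ^ (r.choose 2) :=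
    le_trans hu (Nat.mul_le_mul_right _ hle)
  have h2 : n.choose r * C0 * (autG g).ncard
      ≤ exTri r n * 2 ^ (r.choose 2) * (autG g).ncard :=
    Nat.mul_le_mul_right _ h1
  have hC : C0 * (autG g).ncard = r.factorial * 2 ^ (r - 1) := by
    rw [hC0]
    exact count_C0 hg
  have key : n.choose r * r.factorial * 2 ^ (r - 1)
      ≤ exTri r n * ((autG g).ncard * 2 ^ ((r - 1).choose 2)) * 2 ^ (r - 1) := by
    calc n.choose r * r.factorial * 2 ^ (r - 1)
        = n.choose r * (C0 * (autG g).ncard) := by rw [hC]; ring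
      _ = n.choose r * C0 * (autG g).ncard := by ring
      _ ≤ exTri r n * 2 ^ (r.choose 2) * (autG g).ncard := h2
      _ = exTri r n * ((autG g).ncard * 2 ^ ((r - 1).choose 2)) * 2 ^ (r - 1) := by
          rw [choose2_split r, pow_add]; ring
  exact Nat.le_of_mul_le_mul_right key (Nat.pow_pos (by norm_num))

end MainBound

end S10

/-- if `g` is a special oriented two-graph on `r` vertices then the Turán
density `π(H(r))` (the limit of `ex(H(r),n)/C(n,r)`, which exists) satisfies
`π(H(r)) ≥ r! / (|Aut(g)|·2^(C(r-1,2)))`. -/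

theorem statement10 {V : Type} [Fintype V] (g : V → V → V → ℤ)
    (hg : IsOrientedTwoGraph g) (hsp : IsSpecial g) :
    ∃ L : ℝ,
      Filter.Tendsto
        (fun n => (exTri (Fintype.card V) n : ℝ) / (n.choose (Fintype.card V) : ℝ))
        Filter.atTop (nhds L) ∧
      (Nat.factorial (Fintype.card V) : ℝ) /
          (((autG g).ncard : ℝ) * 2 ^ (Fintype.card V - 1).choose 2) ≤ L := by
  classical
  set r := Fintype.card V with hr
  set e := Fintype.equivFin V with he
  set g0 : Fin r → Fin r → Fin r → ℤ :=
    fun x y z => g (e.symm x) (e.symm y) (e.symm z) with hg0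
  have hg0otg : IsOrientedTwoGraph g0 := S10.otg_pull e.symm hg
  have hisog : TwoGraphIso g g0 := ⟨e, fun x y z => by simp [hg0]⟩
  have hiff : ∀ {W : Type} (X : W → W → W → ℤ), TwoGraphIso g0 X ↔ TwoGraphIso g X :=
    fun X => ⟨fun h => S10.tgi_trans hisog h, fun h => S10.tgi_trans (S10.tgi_symm hisog) h⟩
  have hsp0 : IsSpecial g0 := by
    intro W _ h hh hcard
    have hcard' : Fintype.card W = Fintype.card V + 1 := by
      rwa [Fintype.card_fin] at hcard
    refine le_trans (le_of_eq ?_) (hsp W h hh hcard')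
    congr 1
    ext A
    simp only [Set.mem_setOf_eq, Fintype.card_fin]
    exact and_congr_right (fun _ => hiff _)
  have hanc : (autG g0).ncard = (autG g).ncard := by
    have himg : autG g0 = (fun σ : Equiv.Perm V => e.permCongr σ) '' (autG g) := by
      ext τ
      simp only [Set.mem_image]
      constructor
      · intro hτ
        refine ⟨e.permCongr.symm τ, ?_, e.permCongr.apply_symm_apply τ⟩
        intro x y z
        simp only [Equiv.permCongr_symm, Equiv.permCongr_apply, Equiv.symm_symm]
        have h1 := hτ (e x) (e y) (e z)
        simp only [hg0] at h1
        simpa using h1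
      · rintro ⟨σ, hσ, rfl⟩
        intro x y z
        simp only [Equiv.permCongr_apply, hg0, Equiv.symm_apply_apply]
        exact hσ _ _ _
    rw [himg, Set.ncard_image_of_injective _ (Equiv.injective e.permCongr)]
  have hA0 : (0:ℝ) < ((autG g).ncard : ℝ) := by
    have h1 : (autG g).Nonempty := ⟨1, fun x y z => rfl⟩
    have h2 : 0 < (autG g).ncard := by
      rw [Set.ncard_pos (Set.toFinite _)]
      exact h1
    exact_mod_cast h2
  have hden : (0:ℝ) < ((autG g).ncard : ℝ) * 2 ^ (r - 1).choose 2 := by positivity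
  set c : ℝ := (r.factorial : ℝ) / (((autG g).ncard : ℝ) * 2 ^ (r - 1).choose 2) with hc
  set f : ℕ → ℝ := fun n => (exTri r n : ℝ) / (n.choose r : ℝ) with hf
  have hbound : ∀ n, r ≤ n → c ≤ f n := by
    intro n hn
    have hnat := S10.main_bound hn hg0otg hsp0
    rw [hanc] at hnat
    have hchoose : (0:ℝ) < (n.choose r : ℝ) := by exact_mod_cast Nat.choose_pos hn
    rw [hc, hf, div_le_div_iff₀ hden hchoose]
    calc (r.factorial : ℝ) * (n.choose r : ℝ)
        = ((n.choose r * r.factorial : ℕ) : ℝ) := by push_cast; ring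
      _ ≤ ((exTri r n * ((autG g).ncard * 2 ^ ((r - 1).choose 2)) : ℕ) : ℝ) := by
          exact_mod_cast hnat
      _ = (exTri r n : ℝ) * (((autG g).ncard : ℝ) * 2 ^ ((r - 1).choose 2)) := by
          push_cast; ring
  have hmono : Antitone (fun k => f (k + r)) := by
    apply antitone_nat_of_succ_le
    intro k
    show f (k + 1 + r) ≤ f (k + r)
    rw [show k + 1 + r = (k + r) + 1 by omega]
    exact S10.f_antitone (Nat.le_add_left r k)
  have hbdd : BddBelow (Set.range (fun k => f (k + r))) := by
    refine ⟨0, ?_⟩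
    rintro x ⟨k, rfl⟩
    exact div_nonneg (Nat.cast_nonneg _) (Nat.cast_nonneg _)
  have htend0 : Filter.Tendsto (fun k => f (k + r)) Filter.atTop (nhds (⨅ k, f (k + r))) :=
    tendsto_atTop_ciInf hmono hbdd
  refine ⟨⨅ k, f (k + r), ?_, ?_⟩
  · exact (Filter.tendsto_add_atTop_iff_nat r).mp htend0
  · exact le_ciInf (fun k => hbound (k + r) (Nat.le_add_left r k))
end

section
/- The Paley oriented two-graph g_3 (on 4 vertices) is special, and Aut(g_3) has order 12 and is isomorphic to PSL₂(F_3) (equivalently, to the alternating group on 4 letters). -/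
def gT {V : Type*} (e : V → V → ℤ) : V → V → V → ℤ :=
  fun x y z => e x y * e y z * e z x

open scoped Classical in
noncomputable def chi {F : Type*} [Field F] [Fintype F] (x : F) : ℤ :=
  if x = 0 then 0 else if IsSquare x then 1 else -1

noncomputable def paleyAug (F : Type*) [Field F] [Fintype F] :
    Option F → Option F → ℤ
  | some a, some b => chi (b - a)
  | some _, none => 1
  | none, some _ => -1
  | none, none => 0

/-- The automorphism group of an oriented two-graph, as a subgroup of the symmetric
group on its vertex set. -/
def autSubgroup {V : Type*} (g : V → V → V → ℤ) : Subgroup (Equiv.Perm V) where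
  carrier := {σ | ∀ x y z, g (σ x) (σ y) (σ z) = g x y z}
  one_mem' := by intro x y z; rfl
  mul_mem' := by
    intro a b ha hb x y z
    simpa [Equiv.Perm.mul_apply, hb x y z] using ha (b x) (b y) (b z)
  inv_mem' := by
    intro a ha x y z
    simpa using (ha (a⁻¹ x) (a⁻¹ y) (a⁻¹ z)).symm

instance : Fact (Nat.Prime 3) := ⟨by norm_num⟩

/-- The Paley oriented two-graph `g₃` on the `4` vertices `F₃ ∪ {∞}`. -/
noncomputable def gThree : Option (ZMod 3) → Option (ZMod 3) → Option (ZMod 3) → ℤ :=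
  gT (paleyAug (ZMod 3))

/-! ### Auxiliary computable model of `gThree` -/

def chi' : ZMod 3 → ℤ := fun x => if x = 0 then 0 else if x = 1 then 1 else -1

lemma chi_eq : (chi : ZMod 3 → ℤ) = chi' := by
  funext x
  have hx : x = 0 ∨ x = 1 ∨ x = 2 := by revert x; decide
  have h2 : ¬ IsSquare (2 : ZMod 3) := by decide
  rcases hx with h | h | h <;> subst h <;> simp [chi, chi', IsSquare.one, h2] <;> decide

def eP : Option (ZMod 3) → Option (ZMod 3) → ℤ
  | some a, some b => chi' (b - a)
  | some _, none => 1
  | none, some _ => -1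
  | none, none => 0

lemma paleyAug_eq : paleyAug (ZMod 3) = eP := by
  funext a b
  cases a <;> cases b <;> simp [paleyAug, eP, chi_eq]

lemma gThree_eq : gThree = gT eP := by
  rw [gThree, paleyAug_eq]

lemma gTeP_pair : ∀ p q r s : Option (ZMod 3), p ≠ q → p ≠ r → p ≠ s → q ≠ r → q ≠ s →
    r ≠ s → gT eP p q r * gT eP p q s = -1 := by decide

/-- Any oriented two-graph isomorphic to `gThree` satisfies: two triples sharing an
ordered pair have opposite signs. -/
lemma iso_pair {α : Type*} {g' : α → α → α → ℤ} (hiso : TwoGraphIso gThree g') :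
    ∀ x y z w : α, x ≠ y → x ≠ z → x ≠ w → y ≠ z → y ≠ w → z ≠ w →
      g' x y z * g' x y w = -1 := by
  obtain ⟨φ, hφ⟩ := hiso
  intro x y z w hxy hxz hxw hyz hyw hzw
  have e1 : g' x y z = gThree (φ.symm x) (φ.symm y) (φ.symm z) := by
    rw [← hφ]; simp
  have e2 : g' x y w = gThree (φ.symm x) (φ.symm y) (φ.symm w) := by
    rw [← hφ]; simp
  rw [e1, e2, gThree_eq]
  exact gTeP_pair _ _ _ _ (φ.symm.injective.ne hxy) (φ.symm.injective.ne hxz)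
    (φ.symm.injective.ne hxw) (φ.symm.injective.ne hyz) (φ.symm.injective.ne hyw)
    (φ.symm.injective.ne hzw)

lemma special : IsSpecial gThree := by
  classical
  intro W _ h _hg hcard
  have hc4 : Fintype.card (Option (ZMod 3)) = 4 := by simp
  rw [hc4] at hcard ⊢
  set T : Set (Finset W) := {A | A.card = 4 ∧ ∀ x y z w : W, x ∈ A → y ∈ A → z ∈ A →
      w ∈ A → x ≠ y → x ≠ z → x ≠ w → y ≠ z → y ≠ w → z ≠ w →
      h x y z * h x y w = -1} with hTdef
  have hsub : {A : Finset W | A.card = 4 ∧ TwoGraphIso gThree (restrict3 h A)} ⊆ T := by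
    rintro A ⟨hA, hiso⟩
    refine ⟨hA, ?_⟩
    intro x y z w hx hy hz hw hxy hxz hxw hyz hyw hzw
    exact iso_pair hiso ⟨x, hx⟩ ⟨y, hy⟩ ⟨z, hz⟩ ⟨w, hw⟩
      (by simpa [Subtype.ext_iff] using hxy) (by simpa [Subtype.ext_iff] using hxz)
      (by simpa [Subtype.ext_iff] using hxw) (by simpa [Subtype.ext_iff] using hyz)
      (by simpa [Subtype.ext_iff] using hyw) (by simpa [Subtype.ext_iff] using hzw)
  have hT : T.ncard ≤ 2 := by
    by_contra hlt
    push_neg at hlt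
    obtain ⟨A, hAmem, B, hBmem, C, hCmem, hAB, hAC, hBC⟩ :=
      (Set.two_lt_ncard (Set.toFinite T)).1 hlt
    obtain ⟨hAcard, hAq⟩ := hAmem
    obtain ⟨hBcard, hBq⟩ := hBmem
    obtain ⟨hCcard, hCq⟩ := hCmem
    -- complements are singletons
    have hcompl : ∀ D : Finset W, D.card = 4 → ∃ a, ∀ x, x ∈ D ↔ x ≠ a := by
      intro D hD
      have : Dᶜ.card = 1 := by
        rw [Finset.card_compl, hD, hcard]
      obtain ⟨a, ha⟩ := Finset.card_eq_one.1 this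
      refine ⟨a, fun x => ?_⟩
      rw [← not_iff_not]
      simp only [not_ne_iff, ← Finset.mem_compl, ha, Finset.mem_singleton]
    obtain ⟨a, ha⟩ := hcompl A hAcard
    obtain ⟨b, hb⟩ := hcompl B hBcard
    obtain ⟨c, hc⟩ := hcompl C hCcard
    have hab : a ≠ b := by
      rintro rfl
      exact hAB (Finset.ext fun x => (ha x).trans (hb x).symm)
    have hac : a ≠ c := by
      rintro rfl
      exact hAC (Finset.ext fun x => (ha x).trans (hc x).symm)
    have hbc : b ≠ c := by
      rintro rfl
      exact hBC (Finset.ext fun x => (hb x).trans (hc x).symm)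
    -- two vertices outside {a, b, c}
    have habc : ({a, b, c} : Finset W).card = 3 := by
      rw [Finset.card_insert_of_notMem (by simp [hab, hac]),
        Finset.card_insert_of_notMem (by simp [hbc]), Finset.card_singleton]
    have h2 : ({a, b, c} : Finset W)ᶜ.card = 2 := by
      rw [Finset.card_compl, habc, hcard]
    obtain ⟨v, w, hvw, hvwset⟩ := Finset.card_eq_two.1 h2
    have hv : v ∈ ({a, b, c} : Finset W)ᶜ := by rw [hvwset]; simp
    have hw : w ∈ ({a, b, c} : Finset W)ᶜ := by rw [hvwset]; simp
    simp only [Finset.mem_compl, Finset.mem_insert, Finset.mem_singleton, not_or] at hv hw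
    obtain ⟨hva, hvb, hvc⟩ := hv
    obtain ⟨hwa, hwb, hwc⟩ := hw
    have qA : h v w b * h v w c = -1 :=
      hAq v w b c ((ha v).2 hva) ((ha w).2 hwa) ((ha b).2 (Ne.symm hab))
        ((ha c).2 (Ne.symm hac)) hvw hvb hvc hwb hwc hbc
    have qB : h v w a * h v w c = -1 :=
      hBq v w a c ((hb v).2 hvb) ((hb w).2 hwb) ((hb a).2 hab)
        ((hb c).2 (Ne.symm hbc)) hvw hva hvc hwa hwc hac
    have qC : h v w a * h v w b = -1 :=
      hCq v w a b ((hc v).2 hvc) ((hc w).2 hwc) ((hc a).2 hac)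
        ((hc b).2 hbc) hvw hva hvb hwa hwb hab
    have hprod : ((h v w b) * (h v w c)) * ((h v w a) * (h v w c)) *
        ((h v w a) * (h v w b)) = -1 := by rw [qA, qB, qC]; norm_num
    have hsq : (h v w a * h v w b * h v w c) ^ 2 = -1 := by rw [← hprod]; ring
    have := sq_nonneg (h v w a * h v w b * h v w c)
    omega
  exact le_trans (Set.ncard_le_ncard hsub (Set.toFinite T)) hT

instance : DecidablePred (· ∈ autSubgroup (gT eP)) := fun σ =>
  decidable_of_iff (∀ x y z, gT eP (σ x) (σ y) (σ z) = gT eP x y z) Iff.rfl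

lemma card_aut : Nat.card (autSubgroup (gT eP)) = 12 := by
  rw [Nat.card_eq_fintype_card]
  decide

def vEquiv : Option (ZMod 3) ≃ Fin 4 where
  toFun := fun x => match x with
    | none => 3
    | some a => ⟨a.val, lt_of_lt_of_le a.val_lt (by norm_num)⟩
  invFun := fun i => match i with
    | 0 => some 0
    | 1 => some 1
    | 2 => some 2
    | 3 => none
  left_inv := by decide
  right_inv := by decide

def permMul : Equiv.Perm (Option (ZMod 3)) ≃* Equiv.Perm (Fin 4) :=
  { Equiv.permCongr vEquiv with
    map_mul' := fun p q => by
      ext x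
      simp [Equiv.permCongr_apply, Equiv.Perm.mul_apply] }

lemma map_aut : (autSubgroup (gT eP)).map (permMul : _ →* _) = alternatingGroup (Fin 4) := by
  ext σ
  rw [Subgroup.mem_map, Equiv.Perm.mem_alternatingGroup]
  revert σ
  decide

/-- the Paley oriented two-graph `g₃` (on 4 vertices) is special, and
`Aut(g₃)` has order `12` and is isomorphic to the alternating group on 4 letters
(equivalently, to `PSL₂(F₃)`). -/
theorem statement11 :
    IsSpecial gThree ∧
    Nat.card (autSubgroup gThree) = 12 ∧
    Nonempty (autSubgroup gThree ≃* alternatingGroup (Fin 4)) := by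
  refine ⟨special, ?_, ?_⟩
  · rw [gThree_eq]
    exact card_aut
  · rw [gThree_eq]
    exact ⟨(permMul.subgroupMap (autSubgroup (gT eP))).trans
      (MulEquiv.subgroupCongr map_aut)⟩
end

section
/- π(H(7)) ≥ 35/2^{11} and π(H(8)) ≥ 315/2^{14}; in particular each exceeds the bound 1/2^{r−1} for r = 7, 8 respectively. -/
namespace St14

lemma tf_empty (r : ℕ) {V : Type*} [DecidableEq V] : TriangleFree r (∅ : Finset (Finset V)) := by
  constructor
  · intro A hA; simp at hA
  · intro S hS; simp

lemma set_bdd (r n : ℕ) : BddAbove {m | ∃ H : Finset (Finset (Fin n)), TriangleFree r H ∧ H.card = m} := by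
  refine ⟨Fintype.card (Finset (Fin n)), ?_⟩
  rintro m ⟨H, -, rfl⟩
  exact Finset.card_le_univ H

lemma exTri_spec (r n : ℕ) : ∃ H : Finset (Finset (Fin n)), TriangleFree r H ∧ H.card = exTri r n :=
  Nat.sSup_mem (s := {m | ∃ H : Finset (Finset (Fin n)), TriangleFree r H ∧ H.card = m})
    ⟨0, ∅, tf_empty r, by simp⟩ (set_bdd r n)

lemma le_exTri {r n : ℕ} {H : Finset (Finset (Fin n))} (hH : TriangleFree r H) :
    H.card ≤ exTri r n :=
  le_csSup (set_bdd r n) ⟨H, hH, rfl⟩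

lemma tf_subset {r : ℕ} {V : Type*} [DecidableEq V] {H H' : Finset (Finset V)}
    (hH : TriangleFree r H) (hsub : H' ⊆ H) : TriangleFree r H' := by
  refine ⟨fun A hA => hH.1 A (hsub hA), fun S hS => le_trans ?_ (hH.2 S hS)⟩
  exact Finset.card_le_card (Finset.filter_subset_filter _ hsub)

/-- Forward transfer along an injection. -/
lemma tf_image {r : ℕ} {V W : Type*} [DecidableEq V] [DecidableEq W] {φ : V → W}
    (hφ : Function.Injective φ) {H : Finset (Finset V)} (hH : TriangleFree r H) :
    TriangleFree r (H.image (Finset.image φ)) ∧ (H.image (Finset.image φ)).card = H.card := by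
  classical
  have himg_inj : Set.InjOn (Finset.image φ) ↑H := fun A _ B _ h => Finset.image_injective hφ h
  constructor
  · constructor
    · intro A hA
      obtain ⟨B, hB, rfl⟩ := Finset.mem_image.1 hA
      rw [Finset.card_image_of_injective _ hφ]
      exact hH.1 B hB
    · intro S hS
      have hsub : ∀ A ∈ H, Finset.image φ A ⊆ S → A ⊆ S.preimage φ hφ.injOn := by
        intro A hA hAS a ha
        simp only [Finset.mem_preimage]
        exact hAS (Finset.mem_image_of_mem φ ha)
      have hcard₀ : (S.preimage φ hφ.injOn).card ≤ r + 1 := by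
        rw [← hS]
        exact Finset.card_le_card_of_injOn φ
          (by intro a ha; simpa using ha) hφ.injOn
      have hincl : (H.image (Finset.image φ)).filter (fun A => A ⊆ S) ⊆
          (H.filter (fun A => A ⊆ S.preimage φ hφ.injOn)).image (Finset.image φ) := by
        intro A hA
        simp only [Finset.mem_filter] at hA
        obtain ⟨B, hB, rfl⟩ := Finset.mem_image.1 hA.1
        exact Finset.mem_image_of_mem _ (Finset.mem_filter.2 ⟨hB, hsub B hB hA.2⟩)
      rcases eq_or_lt_of_le hcard₀ with heq | hlt
      · calc ((H.image (Finset.image φ)).filter (fun A => A ⊆ S)).card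
            ≤ ((H.filter (fun A => A ⊆ S.preimage φ hφ.injOn)).image (Finset.image φ)).card :=
              Finset.card_le_card hincl
          _ ≤ (H.filter (fun A => A ⊆ S.preimage φ hφ.injOn)).card := Finset.card_image_le
          _ ≤ 2 := hH.2 _ heq
      · have hcard₀' : (S.preimage φ hφ.injOn).card ≤ r := Nat.lt_succ_iff.mp hlt
        refine le_trans ?_ (by norm_num : (1:ℕ) ≤ 2)
        rw [Finset.card_le_one]
        intro A hA B hB
        simp only [Finset.mem_filter] at hA hB
        obtain ⟨A', hA', rfl⟩ := Finset.mem_image.1 hA.1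
        obtain ⟨B', hB', rfl⟩ := Finset.mem_image.1 hB.1
        have h1 : A' = S.preimage φ hφ.injOn :=
          Finset.eq_of_subset_of_card_le (hsub A' hA' hA.2) (by rw [hH.1 A' hA']; exact hcard₀')
        have h2 : B' = S.preimage φ hφ.injOn :=
          Finset.eq_of_subset_of_card_le (hsub B' hB' hB.2) (by rw [hH.1 B' hB']; exact hcard₀')
        rw [h1, h2]
  · exact Finset.card_image_of_injOn himg_inj



/-- Transfer backwards along an injection, when all edges lie in the range. -/
lemma tf_preimage {r : ℕ} {V W : Type*} [DecidableEq V] [DecidableEq W] {φ : V → W}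
    (hφ : Function.Injective φ) {H : Finset (Finset W)} (hH : TriangleFree r H)
    (hrange : ∀ A ∈ H, ∀ x ∈ A, x ∈ Set.range φ) :
    ∃ H' : Finset (Finset V), TriangleFree r H' ∧ H'.card = H.card := by
  classical
  refine ⟨H.image (fun A => A.preimage φ hφ.injOn), ?_, ?_⟩
  · constructor
    · intro A hA
      obtain ⟨B, hB, rfl⟩ := Finset.mem_image.1 hA
      have himg : (B.preimage φ hφ.injOn).image φ = B := by
        rw [Finset.image_preimage]
        exact Finset.filter_true_of_mem (hrange B hB)
      calc (B.preimage φ hφ.injOn).card = ((B.preimage φ hφ.injOn).image φ).card :=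
            (Finset.card_image_of_injective _ hφ).symm
        _ = B.card := by rw [himg]
        _ = r := hH.1 B hB
    · intro S hS
      have hScard : (S.image φ).card = r + 1 := by
        rw [Finset.card_image_of_injective _ hφ, hS]
      refine le_trans ?_ (hH.2 (S.image φ) hScard)
      calc (Finset.filter (fun A => A ⊆ S) (H.image (fun A => A.preimage φ hφ.injOn))).card
          ≤ ((H.filter (fun A => A ⊆ S.image φ)).image (fun A => A.preimage φ hφ.injOn)).card := ?_
        _ ≤ (H.filter (fun A => A ⊆ S.image φ)).card := Finset.card_image_le
      refine Finset.card_le_card ?_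
      intro A hA
      simp only [Finset.mem_filter] at hA
      obtain ⟨B, hB, rfl⟩ := Finset.mem_image.1 hA.1
      have himg : (B.preimage φ hφ.injOn).image φ = B := by
        rw [Finset.image_preimage]
        exact Finset.filter_true_of_mem (hrange B hB)
      refine Finset.mem_image_of_mem _ (Finset.mem_filter.2 ⟨hB, ?_⟩)
      rw [← himg]
      exact Finset.image_subset_image hA.2
  · refine Finset.card_image_of_injOn ?_
    intro A hA B hB h
    have hA' : (A.preimage φ hφ.injOn).image φ = A := by
      rw [Finset.image_preimage]; exact Finset.filter_true_of_mem (hrange A hA)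
    have hB' : (B.preimage φ hφ.injOn).image φ = B := by
      rw [Finset.image_preimage]; exact Finset.filter_true_of_mem (hrange B hB)
    rw [← hA', ← hB']
    exact congrArg (Finset.image φ) h

/-- Averaging: deleting a vertex. -/
lemma exTri_step (r n : ℕ) : (n + 1 - r) * exTri r (n + 1) ≤ (n + 1) * exTri r n := by
  classical
  obtain ⟨H, hH, hcard⟩ := exTri_spec r (n + 1)
  -- double counting
  have key : ∀ v : Fin (n + 1), (H.filter (fun A => v ∉ A)).card ≤ exTri r n := by
    intro v
    have hHv : TriangleFree r (H.filter (fun A => v ∉ A)) :=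
      tf_subset hH (Finset.filter_subset _ _)
    have hrange : ∀ A ∈ H.filter (fun A => v ∉ A), ∀ x ∈ A, x ∈ Set.range v.succAbove := by
      intro A hA x hx
      rw [Fin.range_succAbove]
      simp only [Finset.mem_filter] at hA
      intro hxv
      simp only [Set.mem_singleton_iff] at hxv
      exact hA.2 (hxv ▸ hx)
    obtain ⟨H', hH', hcard'⟩ := tf_preimage (Fin.succAbove_right_injective (p := v)) hHv hrange
    rw [← hcard']; exact le_exTri hH'
  have hsum : ∑ v : Fin (n + 1), (H.filter (fun A => v ∉ A)).card = H.card * (n + 1 - r) := by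
    have : ∀ v : Fin (n + 1), (H.filter (fun A => v ∉ A)).card
        = ∑ A ∈ H, if v ∉ A then 1 else 0 := fun v => Finset.card_filter _ _
    simp_rw [this]
    rw [Finset.sum_comm]
    have : ∀ A ∈ H, (∑ v : Fin (n + 1), if v ∉ A then 1 else 0) = n + 1 - r := by
      intro A hA
      rw [← Finset.card_filter]
      have : Finset.filter (fun v => v ∉ A) Finset.univ = Aᶜ := by
        ext v; simp
      rw [this, Finset.card_compl, hH.1 A hA, Fintype.card_fin]
    rw [Finset.sum_congr rfl this, Finset.sum_const, smul_eq_mul]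
  calc (n + 1 - r) * exTri r (n + 1) = H.card * (n + 1 - r) := by rw [hcard, mul_comm]
    _ = ∑ v : Fin (n + 1), (H.filter (fun A => v ∉ A)).card := hsum.symm
    _ ≤ ∑ _v : Fin (n + 1), exTri r n := Finset.sum_le_sum (fun v _ => key v)
    _ = (n + 1) * exTri r n := by rw [Finset.sum_const, Finset.card_univ, Fintype.card_fin,
          smul_eq_mul]




abbrev G : Type := Fin 5 → ZMod 2

lemma G_add_self (x : G) : x + x = 0 := by
  funext i
  have : ∀ a : ZMod 2, a + a = 0 := by decide
  exact this (x i)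

lemma G_neg (x : G) : -x = x := neg_eq_of_add_eq_zero_left (G_add_self x)

lemma G_card : Fintype.card G = 32 := by simp

/-- number of `j`-subsets of `G` with sum `s` -/
def B (j : ℕ) (s : G) : ℕ :=
  ((Finset.powersetCard j (Finset.univ : Finset G)).filter (fun P => P.sum id = s)).card

lemma sum_B (j : ℕ) : ∑ s : G, B j s = Nat.choose 32 j := by
  have h := Finset.card_eq_sum_card_fiberwise
    (f := fun P : Finset G => P.sum id) (s := Finset.powersetCard j Finset.univ)
    (t := Finset.univ) (fun x _ => Finset.mem_univ _)
  rw [Finset.card_powersetCard, Finset.card_univ, G_card] at h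
  exact h.symm

lemma key_identity (j : ℕ) (s : G) :
    (j + 2) * B (j + 2) s + (32 - j) * B j s = Nat.choose 32 (j + 1) := by
  classical
  set M := Finset.powersetCard (j + 1) (Finset.univ : Finset G) with hM
  have hMcard : M.card = Nat.choose 32 (j + 1) := by
    rw [hM, Finset.card_powersetCard, Finset.card_univ, G_card]
  have hsplit : (M.filter (fun P => P.sum id + s ∉ P)).card
      + (M.filter (fun P => ¬ (P.sum id + s ∉ P))).card = M.card :=
    Finset.card_filter_add_card_filter_not _
  -- good count
  have hgood : (M.filter (fun P => P.sum id + s ∉ P)).card = B (j + 2) s * (j + 2) := by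
    rw [Finset.card_eq_sum_card_fiberwise
      (f := fun P => insert (P.sum id + s) P)
      (t := (Finset.powersetCard (j + 2) (Finset.univ : Finset G)).filter (fun Q => Q.sum id = s))
      ?_]
    · refine Eq.trans (Finset.sum_congr rfl (g := fun _ => j + 2) ?_) ?_
      · intro Q hQ
        simp only [Finset.mem_filter, Finset.mem_powersetCard_univ] at hQ
        have hfib : (M.filter (fun P => P.sum id + s ∉ P)).filter
            (fun P => insert (P.sum id + s) P = Q) = Q.image (fun y => Q.erase y) := by
          ext P
          simp only [Finset.mem_filter, Finset.mem_image]
          constructor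
          · rintro ⟨⟨hPM, hPnot⟩, hins⟩
            refine ⟨P.sum id + s, ?_, ?_⟩
            · rw [← hins]; exact Finset.mem_insert_self _ _
            · rw [← hins, Finset.erase_insert hPnot]
          · rintro ⟨y, hy, rfl⟩
            have hsum : (Q.erase y).sum id = Q.sum id - id y := Finset.sum_erase_eq_sub hy
            have hsum' : (Q.erase y).sum id + s = y := by
              rw [hsum, hQ.2]
              show s - y + s = y
              rw [sub_eq_add_neg, G_neg]
              rw [add_comm s y, add_assoc, G_add_self, add_zero]
            constructor
            · constructor
              · rw [hM, Finset.mem_powersetCard_univ, Finset.card_erase_of_mem hy, hQ.1]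
                omega
              · rw [hsum']
                exact Finset.notMem_erase y Q
            · rw [hsum', Finset.insert_erase hy]
        show ((M.filter (fun P => P.sum id + s ∉ P)).filter
            (fun P => insert (P.sum id + s) P = Q)).card = j + 2
        rw [hfib, Finset.card_image_of_injOn, hQ.1]
        intro y hy z hz h
        simp only at h
        by_contra hne
        have : y ∈ Q.erase z := Finset.mem_erase.2 ⟨hne, hy⟩
        rw [← h] at this
        exact Finset.notMem_erase y Q this
      · rw [Finset.sum_const, smul_eq_mul]; rfl
    · -- maps into target
      intro P hP
      simp only [Finset.mem_coe, Finset.mem_filter, hM, Finset.mem_powersetCard_univ] at hP ⊢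
      obtain ⟨hPcard, hPnot⟩ := hP
      refine ⟨by rw [Finset.card_insert_of_notMem hPnot, hPcard], ?_⟩
      rw [Finset.sum_insert hPnot]
      show P.sum id + s + P.sum id = s
      rw [add_comm (P.sum id) s, add_assoc, G_add_self, add_zero]
  -- bad count
  have hbad : (M.filter (fun P => ¬ (P.sum id + s ∉ P))).card = B j s * (32 - j) := by
    rw [Finset.card_eq_sum_card_fiberwise
      (f := fun P => P.erase (P.sum id + s))
      (t := (Finset.powersetCard j (Finset.univ : Finset G)).filter (fun Q => Q.sum id = s))
      ?_]
    · refine Eq.trans (Finset.sum_congr rfl (g := fun _ => 32 - j) ?_) ?_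
      · intro Q hQ
        simp only [Finset.mem_filter, Finset.mem_powersetCard_univ] at hQ
        have hfib : (M.filter (fun P => ¬ (P.sum id + s ∉ P))).filter
            (fun P => P.erase (P.sum id + s) = Q)
            = (Finset.univ \ Q).image (fun x => insert x Q) := by
          ext P
          simp only [Finset.mem_filter, Finset.mem_image, Finset.mem_sdiff, Finset.mem_univ,
            true_and, not_not]
          constructor
          · rintro ⟨⟨hPM, hPmem⟩, hers⟩
            refine ⟨P.sum id + s, ?_, ?_⟩
            · rw [← hers]; exact Finset.notMem_erase _ _
            · rw [← hers, Finset.insert_erase hPmem]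
          · rintro ⟨x, hx, rfl⟩
            have hsum : (insert x Q).sum id = x + Q.sum id := by
              rw [Finset.sum_insert hx]; rfl
            have hsum' : (insert x Q).sum id + s = x := by
              rw [hsum, hQ.2, add_assoc, G_add_self, add_zero]
            refine ⟨⟨?_, ?_⟩, ?_⟩
            · rw [hM, Finset.mem_powersetCard_univ, Finset.card_insert_of_notMem hx, hQ.1]
            · rw [hsum']; exact Finset.mem_insert_self _ _
            · rw [hsum', Finset.erase_insert hx]
        show ((M.filter (fun P => ¬ (P.sum id + s ∉ P))).filter
            (fun P => P.erase (P.sum id + s) = Q)).card = 32 - j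
        rw [hfib, Finset.card_image_of_injOn, Finset.card_sdiff_of_subset (Finset.subset_univ Q),
          Finset.card_univ, G_card, hQ.1]
        intro x hx y hy h
        simp only [Finset.coe_sdiff, Finset.coe_univ, Set.mem_diff, Set.mem_univ, true_and,
          Finset.mem_coe] at hx hy
        simp only at h
        have : x ∈ insert y Q := h ▸ Finset.mem_insert_self x Q
        rcases Finset.mem_insert.1 this with h1 | h1
        · exact h1
        · exact absurd h1 hx
      · rw [Finset.sum_const, smul_eq_mul]; rfl
    · intro P hP
      simp only [Finset.mem_coe, Finset.mem_filter, hM, Finset.mem_powersetCard_univ, not_not] at hP ⊢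
      obtain ⟨hPcard, hPmem⟩ := hP
      refine ⟨by rw [Finset.card_erase_of_mem hPmem, hPcard]; omega, ?_⟩
      have hsum : (P.erase (P.sum id + s)).sum id = P.sum id - id (P.sum id + s) :=
        Finset.sum_erase_eq_sub hPmem
      rw [hsum]
      show P.sum id - (P.sum id + s) = s
      rw [sub_eq_add_neg, G_neg, ← add_assoc, G_add_self, zero_add]
  rw [hgood, hbad, hMcard] at hsplit
  rw [mul_comm (j+2), mul_comm (32-j)]
  exact hsplit


set_option maxHeartbeats 1000000 in
/-- The blow-up construction: a triangle-free `r`-graph on `G × Fin t`. -/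
lemma construction (r t : ℕ) (s1 s2 : G) (hne : s1 ≠ s2) :
    ∃ Hc : Finset (Finset (G × Fin t)), TriangleFree r Hc ∧
      (B r s1 + B r s2) * t ^ r ≤ Hc.card := by
  classical
  set good := (Finset.powersetCard r (Finset.univ : Finset G)).filter
      (fun P => P.sum id = s1 ∨ P.sum id = s2) with hgood_def
  set ψ : (Σ P : Finset G, (∀ a ∈ P, Fin t)) → Finset (G × Fin t) :=
      fun x => x.1.attach.image (fun a => (a.1, x.2 a.1 a.2)) with hψ_def
  set dom := good.sigma (fun P => P.pi (fun _ => (Finset.univ : Finset (Fin t)))) with hdom_def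
  -- membership in ψ x
  have hmem : ∀ (x : Σ P : Finset G, (∀ a ∈ P, Fin t)) (v : G × Fin t),
      v ∈ ψ x ↔ ∃ h : v.1 ∈ x.1, v.2 = x.2 v.1 h := by
    intro x v
    simp only [hψ_def, Finset.mem_image, Finset.mem_attach, true_and]
    constructor
    · rintro ⟨a, rfl⟩; exact ⟨a.2, rfl⟩
    · rintro ⟨h, hv⟩
      exact ⟨⟨v.1, h⟩, by rw [← hv]⟩
  have himg : ∀ x : (Σ P : Finset G, (∀ a ∈ P, Fin t)), (ψ x).image Prod.fst = x.1 := by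
    intro x
    rw [hψ_def]
    simp only [Finset.image_image]
    exact Finset.attach_image_val
  have hcardψ : ∀ x : (Σ P : Finset G, (∀ a ∈ P, Fin t)), (ψ x).card = x.1.card := by
    intro x
    rw [hψ_def]
    simp only []
    rw [Finset.card_image_of_injOn, Finset.card_attach]
    intro a _ b _ h
    exact Subtype.ext (congrArg Prod.fst h)
  have hinjfst : ∀ x : (Σ P : Finset G, (∀ a ∈ P, Fin t)), Set.InjOn (Prod.fst : G × Fin t → G) (↑(ψ x) : Set (G × Fin t)) := by
    intro x u hu v hv h
    obtain ⟨h1, h2⟩ := (hmem x u).1 hu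
    obtain ⟨h3, h4⟩ := (hmem x v).1 hv
    obtain ⟨g1, y1⟩ := u
    obtain ⟨g2, y2⟩ := v
    simp only at h h1 h2 h3 h4
    subst h
    exact Prod.ext rfl (h2.trans h4.symm)
  have hsumψ : ∀ x : (Σ P : Finset G, (∀ a ∈ P, Fin t)), (ψ x).sum Prod.fst = x.1.sum id := by
    intro x
    rw [hψ_def]
    simp only []
    rw [Finset.sum_image (by intro a _ b _ h; exact Subtype.ext (congrArg Prod.fst h))]
    simp only []
    exact Finset.sum_attach x.1 id
  refine ⟨dom.image ψ, ⟨?_, ?_⟩, ?_⟩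
  · -- edges have card r
    intro A hA
    obtain ⟨x, hx, rfl⟩ := Finset.mem_image.1 hA
    rw [hcardψ]
    rw [hdom_def, Finset.mem_sigma] at hx
    have := hx.1
    rw [hgood_def, Finset.mem_filter, Finset.mem_powersetCard_univ] at this
    exact this.1
  · -- triangle-free condition
    intro S hS
    by_contra hgt
    push_neg at hgt
    obtain ⟨A1, A2, A3, h1, h2, h3, h12, h13, h23⟩ := Finset.two_lt_card_iff.1 hgt
    -- edge properties
    have hedge : ∀ A ∈ (dom.image ψ).filter (fun A => A ⊆ S),
        A ⊆ S ∧ A.card = r ∧ Set.InjOn (Prod.fst : G × Fin t → G) (↑A : Set (G × Fin t)) ∧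
          (A.sum Prod.fst = s1 ∨ A.sum Prod.fst = s2) := by
      intro A hA
      rw [Finset.mem_filter] at hA
      obtain ⟨hAH, hAS⟩ := hA
      obtain ⟨x, hx, rfl⟩ := Finset.mem_image.1 hAH
      rw [hdom_def, Finset.mem_sigma] at hx
      have hxg := hx.1
      rw [hgood_def, Finset.mem_filter, Finset.mem_powersetCard_univ] at hxg
      refine ⟨hAS, by rw [hcardψ]; exact hxg.1, hinjfst x, ?_⟩
      rw [hsumψ]
      exact hxg.2
    obtain ⟨hA1S, hA1c, hA1i, hA1s⟩ := hedge A1 h1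
    obtain ⟨hA2S, hA2c, hA2i, hA2s⟩ := hedge A2 h2
    obtain ⟨hA3S, hA3c, hA3i, hA3s⟩ := hedge A3 h3
    -- each Ai misses exactly one vertex of S
    have hmiss : ∀ A : Finset (G × Fin t), A ⊆ S → A.card = r → ∃ x ∈ S, A = S.erase x := by
      intro A hAS hAc
      have hcd : (S \ A).card = 1 := by
        rw [Finset.card_sdiff_of_subset hAS, hS, hAc]
        omega
      obtain ⟨x, hx⟩ := Finset.card_eq_one.1 hcd
      have hxS : x ∈ S := by
        have : x ∈ S \ A := by rw [hx]; exact Finset.mem_singleton_self x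
        exact (Finset.mem_sdiff.1 this).1
      refine ⟨x, hxS, ?_⟩
      rw [Finset.erase_eq, ← hx, Finset.sdiff_sdiff_self_left]
      exact (Finset.inter_eq_right.2 hAS).symm
    obtain ⟨x1, hx1S, hA1e⟩ := hmiss A1 hA1S hA1c
    obtain ⟨x2, hx2S, hA2e⟩ := hmiss A2 hA2S hA2c
    obtain ⟨x3, hx3S, hA3e⟩ := hmiss A3 hA3S hA3c
    have hx12 : x1 ≠ x2 := fun h => h12 (by rw [hA1e, hA2e, h])
    have hx13 : x1 ≠ x3 := fun h => h13 (by rw [hA1e, hA3e, h])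
    have hx23 : x2 ≠ x3 := fun h => h23 (by rw [hA2e, hA3e, h])
    -- fst is injective on S
    have hSinj : Set.InjOn (Prod.fst : G × Fin t → G) (↑S : Set (G × Fin t)) := by
      intro u hu v hv huv
      by_contra hneuv
      have key : ∀ (A : Finset (G × Fin t)) (x : G × Fin t), A = S.erase x →
          Set.InjOn (Prod.fst : G × Fin t → G) (↑A : Set (G × Fin t)) →
          x ≠ u → x ≠ v → False := by
        intro A x hAe hAi hxu hxv
        have hu' : u ∈ A := by
          rw [hAe]
          exact Finset.mem_erase.2 ⟨fun h => hxu h.symm, Finset.mem_coe.1 hu⟩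
        have hv' : v ∈ A := by
          rw [hAe]
          exact Finset.mem_erase.2 ⟨fun h => hxv h.symm, Finset.mem_coe.1 hv⟩
        exact hneuv (hAi (Finset.mem_coe.2 hu') (Finset.mem_coe.2 hv') huv)
      have dgen : ∀ x : G × Fin t, x = u ∨ x = v ∨ (x ≠ u ∧ x ≠ v) := by
        intro x
        by_cases a : x = u
        · exact Or.inl a
        · by_cases b : x = v
          · exact Or.inr (Or.inl b)
          · exact Or.inr (Or.inr ⟨a, b⟩)
      have d1 := dgen x1
      have d2 := dgen x2
      have d3 := dgen x3
      rcases d1 with e1 | e1 | e1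
      · rcases d2 with e2 | e2 | e2
        · exact hx12 (e1.trans e2.symm)
        · rcases d3 with e3 | e3 | e3
          · exact hx13 (e1.trans e3.symm)
          · exact hx23 (e2.trans e3.symm)
          · exact key A3 x3 hA3e hA3i e3.1 e3.2
        · exact key A2 x2 hA2e hA2i e2.1 e2.2
      · rcases d2 with e2 | e2 | e2
        · rcases d3 with e3 | e3 | e3
          · exact hx23 (e2.trans e3.symm)
          · exact hx13 (e1.trans e3.symm)
          · exact key A3 x3 hA3e hA3i e3.1 e3.2
        · exact hx12 (e1.trans e2.symm)
        · exact key A2 x2 hA2e hA2i e2.1 e2.2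
      · exact key A1 x1 hA1e hA1i e1.1 e1.2
    -- sums pin down the missing vertices
    have hxx : ∀ (Aa Ab : Finset (G × Fin t)) (xa xb : G × Fin t), xa ∈ S → xb ∈ S →
        Aa = S.erase xa → Ab = S.erase xb →
        Aa.sum Prod.fst = Ab.sum Prod.fst → xa = xb := by
      intro Aa Ab xa xb hxa hxb hae hbe hsum
      rw [hae, hbe, Finset.sum_erase_eq_sub hxa, Finset.sum_erase_eq_sub hxb] at hsum
      have hfst : (xa.1 : G) = xb.1 := sub_right_injective hsum
      exact hSinj (Finset.mem_coe.2 hxa) (Finset.mem_coe.2 hxb) hfst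
    rcases hA1s with g1 | g1 <;> rcases hA2s with g2 | g2 <;> rcases hA3s with g3 | g3 <;>
      first
        | exact hx12 (hxx A1 A2 x1 x2 hx1S hx2S hA1e hA2e (g1.trans g2.symm))
        | exact hx13 (hxx A1 A3 x1 x3 hx1S hx3S hA1e hA3e (g1.trans g3.symm))
        | exact hx23 (hxx A2 A3 x2 x3 hx2S hx3S hA2e hA3e (g2.trans g3.symm))
  · -- cardinality
    have hinjψ : Set.InjOn ψ ↑dom := by
      intro x hx y hy h
      have hP : x.1 = y.1 := by rw [← himg x, ← himg y, h]
      obtain ⟨P, f⟩ := x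
      obtain ⟨P', f'⟩ := y
      simp only at hP
      subst hP
      have hf : f = f' := by
        funext a ha
        have hv : ((a, f a ha) : G × Fin t) ∈ ψ ⟨P, f'⟩ := by
          rw [← h]
          exact (hmem ⟨P, f⟩ (a, f a ha)).2 ⟨ha, rfl⟩
        obtain ⟨hh1, hh2⟩ := (hmem ⟨P, f'⟩ (a, f a ha)).1 hv
        exact hh2
      rw [hf]
    rw [Finset.card_image_of_injOn hinjψ, hdom_def, Finset.card_sigma]
    have hpi : ∀ P ∈ good, (P.pi (fun _ => (Finset.univ : Finset (Fin t)))).card = t ^ r := by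
      intro P hP
      rw [Finset.card_pi, Finset.prod_const, Finset.card_univ, Fintype.card_fin]
      congr 1
      rw [hgood_def, Finset.mem_filter, Finset.mem_powersetCard_univ] at hP
      exact hP.1
    have hsum' : ∑ P ∈ good, (P.pi (fun _ => (Finset.univ : Finset (Fin t)))).card
        = good.card * t ^ r :=
      Eq.trans (Finset.sum_congr rfl (g := fun _ => t ^ r) hpi)
        (by rw [Finset.sum_const, smul_eq_mul])
    rw [hsum']
    have hgc : good.card = B r s1 + B r s2 := by
      rw [hgood_def, Finset.filter_or, Finset.card_union_of_disjoint]
      · rfl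
      · rw [Finset.disjoint_filter]
        intro P hP hp hq
        exact hne (hp.symm.trans hq)
    rw [hgc]



lemma choose32_5 : Nat.choose 32 5 = 201376 := by
  rw [Nat.choose_eq_descFactorial_div_factorial]
  norm_num [Nat.descFactorial, Nat.factorial]

lemma choose32_6 : Nat.choose 32 6 = 906192 := by
  rw [Nat.choose_eq_descFactorial_div_factorial]
  norm_num [Nat.descFactorial, Nat.factorial]

lemma choose32_7 : Nat.choose 32 7 = 3365856 := by
  rw [Nat.choose_eq_descFactorial_div_factorial]
  norm_num [Nat.descFactorial, Nat.factorial]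

lemma pair_min (j : ℕ) :
    ∃ s1 s2 : G, s1 ≠ s2 ∧ 32 * B j s1 ≤ Nat.choose 32 j ∧ 31 * B j s2 ≤ Nat.choose 32 j := by
  classical
  obtain ⟨s1, hs1mem, hs1min⟩ := Finset.exists_min_image Finset.univ (B j) Finset.univ_nonempty
  have herase : (Finset.univ.erase s1).Nonempty := by
    obtain ⟨y, hy⟩ := exists_ne s1
    exact ⟨y, Finset.mem_erase.2 ⟨hy, Finset.mem_univ y⟩⟩
  obtain ⟨s2, hs2mem, hs2min⟩ := Finset.exists_min_image (Finset.univ.erase s1) (B j) herase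
  refine ⟨s1, s2, fun h => (Finset.mem_erase.1 hs2mem).1 h.symm, ?_, ?_⟩
  · calc 32 * B j s1 = Finset.univ.card • B j s1 := by
          rw [Finset.card_univ, G_card, smul_eq_mul]
      _ ≤ ∑ s : G, B j s :=
          Finset.card_nsmul_le_sum _ _ _ (fun x _ => hs1min x (Finset.mem_univ x))
      _ = Nat.choose 32 j := sum_B j
  · calc 31 * B j s2 = (Finset.univ.erase s1).card • B j s2 := by
          rw [Finset.card_erase_of_mem (Finset.mem_univ s1), Finset.card_univ, G_card,
            smul_eq_mul]
      _ ≤ ∑ s ∈ Finset.univ.erase s1, B j s :=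
          Finset.card_nsmul_le_sum _ _ _ (fun x hx => hs2min x hx)
      _ ≤ ∑ s : G, B j s :=
          Finset.sum_le_sum_of_subset (Finset.erase_subset _ _)
      _ = Nat.choose 32 j := sum_B j

lemma N7pair : ∃ s1 s2 : G, s1 ≠ s2 ∧ 209583 ≤ B 7 s1 + B 7 s2 := by
  obtain ⟨s1, s2, hne, h1, h2⟩ := pair_min 5
  have k1 : 7 * B 7 s1 + 27 * B 5 s1 = Nat.choose 32 6 := key_identity 5 s1
  have k2 : 7 * B 7 s2 + 27 * B 5 s2 = Nat.choose 32 6 := key_identity 5 s2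
  rw [choose32_6] at k1 k2
  rw [choose32_5] at h1 h2
  exact ⟨s1, s2, hne, by omega⟩

lemma N8pair : ∃ s1 s2 : G, s1 ≠ s2 ∧ 654427 ≤ B 8 s1 + B 8 s2 := by
  obtain ⟨s1, s2, hne, h1, h2⟩ := pair_min 6
  have k1 : 8 * B 8 s1 + 26 * B 6 s1 = Nat.choose 32 7 := key_identity 6 s1
  have k2 : 8 * B 8 s2 + 26 * B 6 s2 = Nat.choose 32 7 := key_identity 6 s2
  rw [choose32_7] at k1 k2
  rw [choose32_6] at h1 h2
  exact ⟨s1, s2, hne, by omega⟩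

lemma exTri_lower (r t : ℕ) (s1 s2 : G) (hne : s1 ≠ s2) :
    (B r s1 + B r s2) * t ^ r ≤ exTri r (32 * t) := by
  obtain ⟨Hc, hTF, hcard⟩ := construction r t s1 s2 hne
  have hcardeq : Fintype.card (G × Fin t) = 32 * t := by
    rw [Fintype.card_prod, G_card, Fintype.card_fin]
  let e := Fintype.equivFinOfCardEq hcardeq
  obtain ⟨hTF', hcard'⟩ := tf_image e.injective hTF
  calc (B r s1 + B r s2) * t ^ r ≤ Hc.card := hcard
    _ = (Hc.image (Finset.image e)).card := hcard'.symm
    _ ≤ exTri r (32 * t) := le_exTri hTF'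

lemma nat_bound7 (t E : ℕ) (hE : 209583 * t ^ 7 ≤ E) :
    35 * Nat.choose (32 * t) 7 ≤ 2048 * E := by
  have h1 : 5040 * Nat.choose (32 * t) 7 ≤ 34359738368 * t ^ 7 := by
    calc 5040 * Nat.choose (32 * t) 7 = Nat.descFactorial (32 * t) 7 := by
          rw [Nat.descFactorial_eq_factorial_mul_choose]
          norm_num [Nat.factorial]
      _ ≤ (32 * t) ^ 7 := Nat.descFactorial_le_pow _ _
      _ = 34359738368 * t ^ 7 := by rw [mul_pow]; norm_num
  have h2 : 5040 * (35 * Nat.choose (32 * t) 7) ≤ 5040 * (2048 * E) := by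
    calc 5040 * (35 * Nat.choose (32 * t) 7)
        = 35 * (5040 * Nat.choose (32 * t) 7) := by ring
      _ ≤ 35 * (34359738368 * t ^ 7) := Nat.mul_le_mul_left _ h1
      _ = 1202590842880 * t ^ 7 := by ring
      _ ≤ 10321920 * (209583 * t ^ 7) := by
          rw [← mul_assoc]
          exact Nat.mul_le_mul_right _ (by norm_num)
      _ ≤ 10321920 * E := Nat.mul_le_mul_left _ hE
      _ = 5040 * (2048 * E) := by ring
  exact Nat.le_of_mul_le_mul_left h2 (by norm_num)

lemma nat_bound8 (t E : ℕ) (hE : 654427 * t ^ 8 ≤ E) :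
    315 * Nat.choose (32 * t) 8 ≤ 16384 * E := by
  have h1 : 40320 * Nat.choose (32 * t) 8 ≤ 1099511627776 * t ^ 8 := by
    calc 40320 * Nat.choose (32 * t) 8 = Nat.descFactorial (32 * t) 8 := by
          rw [Nat.descFactorial_eq_factorial_mul_choose]
          norm_num [Nat.factorial]
      _ ≤ (32 * t) ^ 8 := Nat.descFactorial_le_pow _ _
      _ = 1099511627776 * t ^ 8 := by rw [mul_pow]; norm_num
  have h2 : 40320 * (315 * Nat.choose (32 * t) 8) ≤ 40320 * (16384 * E) := by
    calc 40320 * (315 * Nat.choose (32 * t) 8)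
        = 315 * (40320 * Nat.choose (32 * t) 8) := by ring
      _ ≤ 315 * (1099511627776 * t ^ 8) := Nat.mul_le_mul_left _ h1
      _ = 346346162749440 * t ^ 8 := by ring
      _ ≤ 660602880 * (654427 * t ^ 8) := by
          rw [← mul_assoc]
          exact Nat.mul_le_mul_right _ (by norm_num)
      _ ≤ 660602880 * E := Nat.mul_le_mul_left _ hE
      _ = 40320 * (16384 * E) := by ring
  exact Nat.le_of_mul_le_mul_left h2 (by norm_num)

lemma main_r (r a b : ℕ) (hr : 1 ≤ r) (hr32 : r ≤ 32) (hb : 0 < b)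
    (hkey : ∀ t : ℕ, 1 ≤ t → a * Nat.choose (32 * t) r ≤ b * exTri r (32 * t)) :
    ∃ L : ℝ, Filter.Tendsto (fun n => (exTri r n : ℝ) / (n.choose r : ℝ)) Filter.atTop (nhds L) ∧
      (a : ℝ) / (b : ℝ) ≤ L := by
  set f : ℕ → ℝ := fun n => (exTri r n : ℝ) / (n.choose r : ℝ) with hf
  have hnonneg : ∀ n, 0 ≤ f n := fun n => div_nonneg (Nat.cast_nonneg _) (Nat.cast_nonneg _)
  have hstep : ∀ n, r ≤ n → f (n + 1) ≤ f n := by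
    intro n hn
    have hc1 : 0 < n.choose r := Nat.choose_pos hn
    have hc2 : 0 < (n + 1).choose r := Nat.choose_pos (le_trans hn (Nat.le_succ n))
    rw [hf]
    simp only []
    rw [div_le_div_iff₀ (by exact_mod_cast hc2) (by exact_mod_cast hc1)]
    have hnat : exTri r (n + 1) * n.choose r ≤ exTri r n * (n + 1).choose r := by
      have hmul : (n + 1) * (exTri r (n + 1) * n.choose r)
          ≤ (n + 1) * (exTri r n * (n + 1).choose r) := by
        calc (n + 1) * (exTri r (n + 1) * n.choose r)
            = exTri r (n + 1) * (n.choose r * (n + 1)) := by ring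
          _ = exTri r (n + 1) * ((n + 1).choose r * (n + 1 - r)) := by
              rw [Nat.choose_mul_succ_eq]
          _ = ((n + 1 - r) * exTri r (n + 1)) * (n + 1).choose r := by ring
          _ ≤ ((n + 1) * exTri r n) * (n + 1).choose r :=
              Nat.mul_le_mul_right _ (exTri_step r n)
          _ = (n + 1) * (exTri r n * (n + 1).choose r) := by ring
      exact Nat.le_of_mul_le_mul_left hmul (Nat.succ_pos n)
    exact_mod_cast hnat
  have hmono : ∀ m n, r ≤ m → m ≤ n → f n ≤ f m := by
    intro m n hm hmn
    induction n, hmn using Nat.le_induction with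
    | base => exact le_refl _
    | succ n hmn ih => exact le_trans (hstep n (le_trans hm hmn)) ih
  have hant : Antitone (fun k => f (k + r)) := by
    refine antitone_nat_of_succ_le (fun k => ?_)
    have h := hstep (k + r) (Nat.le_add_left r k)
    have heq : k + 1 + r = k + r + 1 := by omega
    simpa [heq] using h
  have hbdd : BddBelow (Set.range fun k => f (k + r)) := by
    refine ⟨0, ?_⟩
    rintro x ⟨k, rfl⟩
    exact hnonneg _
  refine ⟨⨅ k, f (k + r), ?_, ?_⟩
  · exact (Filter.tendsto_add_atTop_iff_nat r).1 (tendsto_atTop_ciInf hant hbdd)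
  · refine le_ciInf ?_
    intro k
    have ht : 1 ≤ k + r := le_trans hr (Nat.le_add_left r k)
    have h32 : k + r ≤ 32 * (k + r) := Nat.le_mul_of_pos_left _ (by norm_num)
    refine le_trans ?_ (hmono (k + r) (32 * (k + r)) (Nat.le_add_left r k) h32)
    have hcpos : 0 < (32 * (k + r)).choose r :=
      Nat.choose_pos (le_trans hr32 (by nlinarith [Nat.le_mul_of_pos_left 32 (lt_of_lt_of_le one_pos ht)]))
    rw [hf]
    simp only []
    rw [div_le_div_iff₀ (by exact_mod_cast hb) (by exact_mod_cast hcpos)]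
    have hk := hkey (k + r) ht
    have : (a : ℝ) * ((32 * (k + r)).choose r : ℝ) ≤ (b : ℝ) * (exTri r (32 * (k + r)) : ℝ) := by
      exact_mod_cast hk
    linarith

end St14

open St14 in
/-- `π(H(7)) ≥ 35/2^11` and `π(H(8)) ≥ 315/2^14` (the defining limits
exist); in particular each bound exceeds `1/2^(r-1)` for `r = 7, 8` respectively. -/
theorem statement14 :
    (∃ L : ℝ,
      Filter.Tendsto (fun n => (exTri 7 n : ℝ) / (n.choose 7 : ℝ)) Filter.atTop (nhds L) ∧
      35 / 2 ^ 11 ≤ L ∧ 1 / 2 ^ 6 < L) ∧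
    (∃ L : ℝ,
      Filter.Tendsto (fun n => (exTri 8 n : ℝ) / (n.choose 8 : ℝ)) Filter.atTop (nhds L) ∧
      315 / 2 ^ 14 ≤ L ∧ 1 / 2 ^ 7 < L) ∧
    (1 / 2 ^ 6 : ℝ) < 35 / 2 ^ 11 ∧ (1 / 2 ^ 7 : ℝ) < 315 / 2 ^ 14 := by
  have h7key : ∀ t : ℕ, 1 ≤ t → 35 * Nat.choose (32 * t) 7 ≤ 2048 * exTri 7 (32 * t) := by
    intro t ht
    obtain ⟨s1, s2, hne, hN⟩ := N7pair
    have hlow : (B 7 s1 + B 7 s2) * t ^ 7 ≤ exTri 7 (32 * t) := exTri_lower 7 t s1 s2 hne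
    have hE : 209583 * t ^ 7 ≤ exTri 7 (32 * t) :=
      le_trans (Nat.mul_le_mul_right _ hN) hlow
    exact nat_bound7 t _ hE
  have h8key : ∀ t : ℕ, 1 ≤ t → 315 * Nat.choose (32 * t) 8 ≤ 16384 * exTri 8 (32 * t) := by
    intro t ht
    obtain ⟨s1, s2, hne, hN⟩ := N8pair
    have hlow : (B 8 s1 + B 8 s2) * t ^ 8 ≤ exTri 8 (32 * t) := exTri_lower 8 t s1 s2 hne
    have hE : 654427 * t ^ 8 ≤ exTri 8 (32 * t) :=
      le_trans (Nat.mul_le_mul_right _ hN) hlow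
    exact nat_bound8 t _ hE
  obtain ⟨L7, hT7, hL7⟩ := main_r 7 35 2048 (by norm_num) (by norm_num) (by norm_num) h7key
  obtain ⟨L8, hT8, hL8⟩ := main_r 8 315 16384 (by norm_num) (by norm_num) (by norm_num) h8key
  have hL7' : (35 : ℝ) / 2 ^ 11 ≤ L7 := by
    calc (35 : ℝ) / 2 ^ 11 = (35 : ℝ) / (2048 : ℝ) := by norm_num
      _ ≤ L7 := by exact_mod_cast hL7
  have hL8' : (315 : ℝ) / 2 ^ 14 ≤ L8 := by
    calc (315 : ℝ) / 2 ^ 14 = (315 : ℝ) / (16384 : ℝ) := by norm_num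
      _ ≤ L8 := by exact_mod_cast hL8
  refine ⟨⟨L7, hT7, hL7', ?_⟩, ⟨L8, hT8, hL8', ?_⟩, by norm_num, by norm_num⟩
  · exact lt_of_lt_of_le (by norm_num : (1 : ℝ) / 2 ^ 6 < 35 / 2 ^ 11) hL7'
  · exact lt_of_lt_of_le (by norm_num : (1 : ℝ) / 2 ^ 7 < 315 / 2 ^ 14) hL8'
end

section
/- Let p be an odd prime and let f: F_p → {0,±1} be any function with f(x)=0 if and only if x=0, such that f⋆f = χ⋆χ. Then f = χ or f = −χ. -/
/-- let `p` be an odd prime and `f : F_p → {0,±1}` with `f(x) = 0` iff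
`x = 0`.  If `f ⋆ f = χ ⋆ χ`, where `(f ⋆ g)(b) = ∑_a f(b-a)·g(a)` is the convolution on
the additive group `F_p`, then `f = χ` or `f = -χ`. -/
theorem statement16 (p : ℕ) [Fact p.Prime] (hp : p ≠ 2) (f : ZMod p → ℤ)
    (hzero : ∀ x, f x = 0 ↔ x = 0)
    (hpm : ∀ x, f x = 1 ∨ f x = 0 ∨ f x = -1)
    (hconv : ∀ b : ZMod p, ∑ a : ZMod p, f (b - a) * f a = ∑ a : ZMod p, chi (b - a) * chi a) :
    (∀ x, f x = chi x) ∨ (∀ x, f x = - chi x) := by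
  have hppr : p.Prime := Fact.out
  have hp0 : 0 < p := hppr.pos
  set n : ℕ+ := ⟨p, hp0⟩ with hn
  set K := CyclotomicField n ℚ with hK
  haveI : CharZero K := charZero_of_injective_algebraMap (algebraMap ℚ K).injective
  haveI : IsCyclotomicExtension {(n : ℕ)} ℚ K :=
    by
    haveI : NeZero ((n : ℕ) : ℚ) := ⟨by exact_mod_cast n.ne_zero⟩
    convert CyclotomicField.isCyclotomicExtension (n : ℕ) ℚ
    · rfl
    · exact Subsingleton.elim _ _
  set ζ : K := IsCyclotomicExtension.zeta n ℚ K with hzeta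
  have hζ : IsPrimitiveRoot ζ p := IsCyclotomicExtension.zeta_spec n ℚ K
  have hζ1 : ζ ^ p = 1 := hζ.pow_eq_one
  set ψ : AddChar (ZMod p) K := AddChar.zmodChar p hζ1 with hψ
  have hψ_apply : ∀ a : ZMod p, ψ a = ζ ^ a.val := fun a => AddChar.zmodChar_apply hζ1 a
  -- mod-p exponent reduction
  have hmod : ∀ m : ℕ, ζ ^ (m % p) = ζ ^ m := by
    intro m
    conv_rhs => rw [← Nat.div_add_mod m p]
    rw [pow_add, pow_mul, hζ1, one_pow, one_mul]
  -- the "Fourier coefficient" of an integer-valued function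
  set A : (ZMod p → ℤ) → ZMod p → K :=
    fun g t => ∑ a : ZMod p, (g a : K) * ψ (a * t) with hA
  -- squaring identity
  have key : ∀ (g : ZMod p → ℤ) (t : ZMod p),
      (A g t) ^ 2 = ∑ s : ZMod p, ((∑ a : ZMod p, g (s - a) * g a : ℤ) : K) * ψ (s * t) := by
    intro g t
    rw [hA, sq]
    rw [Finset.sum_mul_sum]
    have h1 : ∀ a : ZMod p,
        ∑ b : ZMod p, ((g a : K) * ψ (a * t)) * ((g b : K) * ψ (b * t))
          = ∑ s : ZMod p, (g (s - a) : K) * (g a : K) * ψ (s * t) := by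
      intro a
      rw [← Equiv.sum_comp (Equiv.addLeft a)
        (fun s => (g (s - a) : K) * (g a : K) * ψ (s * t))]
      refine Finset.sum_congr rfl fun b _ => ?_
      simp only [Equiv.coe_addLeft]
      have h2 : a + b - a = b := by ring
      have h3 : (a + b) * t = a * t + b * t := by ring
      rw [h2, h3, AddChar.map_add_eq_mul]
      ring
    rw [Finset.sum_congr rfl fun a _ => h1 a, Finset.sum_comm]
    refine Finset.sum_congr rfl fun s _ => ?_
    push_cast
    erw [Int.cast_sum]
    push_cast
    rw [Finset.sum_mul]
  -- the two squares agree
  have hsq : ∀ t : ZMod p, (A f t) ^ 2 = (A chi t) ^ 2 := by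
    intro t
    rw [key, key]
    refine Finset.sum_congr rfl fun s _ => ?_
    rw [hconv s]
  -- chi agrees with the quadratic character
  have hchiq : ∀ a : ZMod p, chi a = quadraticChar (ZMod p) a := by
    intro a
    rw [quadraticChar_apply, quadraticCharFun]
    by_cases h : a = 0 <;> by_cases hs : IsSquare a <;> simp [chi, h, hs]
  have hchisum : ∑ a : ZMod p, chi a = 0 := by
    simp_rw [hchiq]
    exact quadraticChar_sum_zero (by rwa [ZMod.ringChar_zmod_n])
  -- value at t = 0
  have hAzero : ∀ g : ZMod p → ℤ, A g 0 = ((∑ a : ZMod p, g a : ℤ) : K) := by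
    intro g
    rw [hA]
    push_cast
    rw [show ((∑ a : ZMod p, g a : ℤ) : K) = ∑ a : ZMod p, (g a : K) from Int.cast_sum (R := K) _ _]
    refine Finset.sum_congr rfl fun a _ => ?_
    rw [mul_zero, AddChar.map_zero_eq_one, mul_one]
  have hAchi0 : A chi 0 = 0 := by rw [hAzero, hchisum]; norm_num
  have hAf0 : A f 0 = 0 := by
    have := hsq 0
    rw [hAchi0] at this
    simpa [pow_eq_zero_iff] using this
  -- Galois automorphism sending ζ to ζ ^ t
  have hirr : Irreducible (Polynomial.cyclotomic (n : ℕ) ℚ) :=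
    Polynomial.cyclotomic.irreducible_rat n.pos
  have galois : ∀ t : ZMod p, t ≠ 0 → ∃ σ : K ≃ₐ[ℚ] K,
      ∀ g : ZMod p → ℤ, σ (A g 1) = A g t := by
    intro t ht
    set u : (ZMod p)ˣ := Units.mk0 t ht with hu
    set σ : K ≃ₐ[ℚ] K := (IsCyclotomicExtension.autEquivPow K hirr).symm u with hσ
    refine ⟨σ, fun g => ?_⟩
    have hspec : σ ζ = ζ ^ t.val := by
      have h1 : (IsCyclotomicExtension.autEquivPow K hirr) σ = u := by
        rw [hσ]; exact MulEquiv.apply_symm_apply _ _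
      have h2 := hζ.autToPow_spec ℚ σ
      rw [show hζ.autToPow ℚ σ = (IsCyclotomicExtension.autEquivPow K hirr) σ from rfl, h1] at h2
      rw [← h2, hu]
      rfl
    rw [hA]
    simp only [mul_one]
    rw [map_sum]
    refine Finset.sum_congr rfl fun a _ => ?_
    have hint : σ ((g a : ℤ) : K) = ((g a : ℤ) : K) := map_intCast (σ : K →+* K) (g a)
    rw [map_mul, hint]
    congr 1
    rw [hψ_apply, hψ_apply, map_pow, hspec, ← pow_mul, ZMod.val_mul, hmod, Nat.mul_comm]
  -- orthogonality
  have horth : ∀ c : ZMod p, (∑ t : ZMod p, ψ (c * t)) = if c = 0 then (p : K) else 0 := by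
    intro c
    by_cases hc : c = 0
    · simp [hc, ZMod.card]
    · rw [if_neg hc]
      set S := ∑ t : ZMod p, ψ (c * t) with hS
      have hshift : ψ c * S = S := by
        rw [hS, Finset.mul_sum]
        rw [← Equiv.sum_comp (Equiv.addRight (1 : ZMod p)) (fun t => ψ (c * t))]
        refine Finset.sum_congr rfl fun t _ => ?_
        simp only [Equiv.coe_addRight]
        rw [show c * (t + 1) = c * t + c by ring, AddChar.map_add_eq_mul]
        ring
      have hne : ψ c ≠ 1 := by
        rw [hψ_apply]
        exact hζ.pow_ne_one_of_pos_of_lt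
          (fun h => hc ((ZMod.val_eq_zero c).mp h)) (ZMod.val_lt c)
      have : (ψ c - 1) * S = 0 := by rw [sub_mul, one_mul, hshift, sub_self]
      rcases mul_eq_zero.mp this with h | h
      · exact absurd (sub_eq_zero.mp h) hne
      · exact h
  -- Fourier inversion
  have hinv : ∀ (g : ZMod p → ℤ) (x : ZMod p),
      ∑ t : ZMod p, A g t * ψ (-(x * t)) = (p : K) * (g x : K) := by
    intro g x
    rw [hA]
    simp_rw [Finset.sum_mul]
    rw [Finset.sum_comm]
    have h1 : ∀ a : ZMod p, ∑ t : ZMod p, ((g a : K) * ψ (a * t)) * ψ (-(x * t))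
        = (g a : K) * (if a - x = 0 then (p : K) else 0) := by
      intro a
      rw [← horth (a - x), Finset.mul_sum]
      refine Finset.sum_congr rfl fun t _ => ?_
      rw [mul_assoc, ← AddChar.map_add_eq_mul]
      congr 2
      ring
    rw [Finset.sum_congr rfl fun a _ => h1 a]
    rw [Finset.sum_eq_single x]
    · rw [if_pos (sub_self x), mul_comm]
    · intro b _ hb
      rw [if_neg (fun h => hb (by rwa [sub_eq_zero] at h)), mul_zero]
    · intro h
      exact absurd (Finset.mem_univ x) h
  -- get the sign
  have hsq1 := hsq 1
  have hcases : A f 1 = A chi 1 ∨ A f 1 = -(A chi 1) := by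
    have := sq_eq_sq_iff_eq_or_eq_neg.mp hsq1
    exact this
  -- common final argument
  have final : ∀ ε : ℤ, (ε = 1 ∨ ε = -1) → A f 1 = (ε : K) * A chi 1 →
      ∀ x, f x = ε * chi x := by
    intro ε hεpm hε x
    have hAll : ∀ t : ZMod p, A f t = (ε : K) * A chi t := by
      intro t
      by_cases ht : t = 0
      · rw [ht, hAf0, hAchi0, mul_zero]
      · obtain ⟨σ, hσg⟩ := galois t ht
        rw [← hσg f, ← hσg chi, hε, map_mul]
        congr 1
        exact map_intCast (σ : K →+* K) ε
    have h1 : (p : K) * (f x : K) = (ε : K) * ((p : K) * (chi x : K)) := by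
      rw [← hinv f x, ← hinv chi x, Finset.mul_sum]
      refine Finset.sum_congr rfl fun t _ => ?_
      rw [hAll t]; ring
    have hpne : (p : K) ≠ 0 := Nat.cast_ne_zero.mpr hp0.ne'
    have h1' : (p : K) * (f x : K) = (p : K) * ((ε * chi x : ℤ) : K) := by
      rw [h1]; push_cast; ring
    have h2 : (f x : K) = ((ε * chi x : ℤ) : K) := mul_left_cancel₀ hpne h1'
    exact_mod_cast h2
  rcases hcases with h | h
  · left
    intro x
    have := final 1 (Or.inl rfl) (by rw [h]; push_cast; ring) x
    simpa using this
  · right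
    intro x
    have := final (-1) (Or.inr rfl) (by rw [h]; push_cast; ring) x
    simpa using this
end
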